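/- arXiv:1401.3251 — 13 statements merged into one kernel-verified Lean document; each statement's English description precedes it below -/
import Mathlib

section
/- For every proper coloring c of a graph G, there exists an induced subgraph H of G containing exactly one vertex from each color class of c such that the discrepancy of c equals |c(H)| - χ(H). -/
open SimpleGraph

noncomputable def chi {W : Type*} (G : SimpleGraph W) : ℕ := G.chromaticNumber.toNat

def IsProper {W : Type*} (G : SimpleGraph W) (c : W → ℕ) : Prop :=
  ∀ ⦃u v⦄, G.Adj u v → c u ≠ c v

noncomputable def disc {W : Type*} (G : SimpleGraph W) (c : W → ℕ) (s : Finset W) : ℕ :=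
  (s.image c).card - chi (G.induce (s : Set W))

noncomputable def phiC {W : Type*} [Fintype W] (G : SimpleGraph W) (c : W → ℕ) : ℕ :=
  Finset.univ.sup (disc G c)

noncomputable def phi {W : Type*} [Fintype W] (G : SimpleGraph W) : ℕ :=
  sInf {n | ∃ c, IsProper G c ∧ phiC G c = n}

open Classical in
noncomputable def phiHatC {W : Type*} [Fintype W] (G : SimpleGraph W) (c : W → ℕ) : ℕ :=
  Finset.univ.sup (fun s : Finset W =>
    if (G.induce (s : Set W)).Connected then disc G c s else 0)

noncomputable def phiHat {W : Type*} [Fintype W] (G : SimpleGraph W) : ℕ :=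
  sInf {n | ∃ c, IsProper G c ∧ phiHatC G c = n}

open Classical in
noncomputable def indepNum' {W : Type*} [Fintype W] (G : SimpleGraph W) : ℕ :=
  Finset.univ.sup fun s : Finset W =>
    if ∀ u ∈ s, ∀ v ∈ s, ¬ G.Adj u v then s.card else 0

open Classical in
noncomputable def cliqueNum' {W : Type*} [Fintype W] (G : SimpleGraph W) : ℕ :=
  Finset.univ.sup fun s : Finset W =>
    if G.IsClique (s : Set W) then s.card else 0

open Classical in
lemma chi_le_of_colorable {W : Type*} (G : SimpleGraph W) {n : ℕ} (h : G.Colorable n) :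
    chi G ≤ n := by
  have := h.chromaticNumber_le
  unfold chi
  exact ENat.toNat_le_of_le_coe this

open Classical in
lemma colorable_chi {W : Type*} [Fintype W] (G : SimpleGraph W) : G.Colorable (chi G) :=
  G.colorable_chromaticNumber_of_fintype

open Classical in
lemma colorable_induce_mono {V : Type*} (G : SimpleGraph V) {A B : Set V} (hAB : A ⊆ B)
    {n : ℕ} (h : (G.induce B).Colorable n) : (G.induce A).Colorable n := by
  obtain ⟨C⟩ := h
  exact ⟨SimpleGraph.Coloring.mk (fun x => C ⟨x.1, hAB x.2⟩) (fun {u v} huv => C.valid huv)⟩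

open Classical in
lemma colorable_induce_insert {V : Type*} (G : SimpleGraph V) (A : Set V) (v : V)
    {n : ℕ} (h : (G.induce A).Colorable n) :
    (G.induce (insert v A)).Colorable (n + 1) := by
  obtain ⟨C⟩ := h
  refine ⟨SimpleGraph.Coloring.mk
    (fun x => if hx : (x : V) ∈ A then (C ⟨x, hx⟩).castSucc else Fin.last n) ?_⟩
  rintro ⟨u, hu⟩ ⟨w, hw⟩ huw
  dsimp only
  split_ifs with h1 h2 h2
  · intro he
    have hadj : (G.induce A).Adj ⟨u, h1⟩ ⟨w, h2⟩ := huw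
    exact C.valid hadj (Fin.castSucc_injective n he)
  · simp [Fin.ext_iff]; omega
  · simp [Fin.ext_iff]; omega
  · have : u = v := hu.resolve_right h1
    have : w = v := hw.resolve_right h2
    exact absurd (by subst_vars; exact huw) (G.irrefl)

open Classical in
lemma chi_union_le {V : Type*} [Fintype V] (G : SimpleGraph V) (A B : Finset V) :
    chi (G.induce ((A ∪ B : Finset V) : Set V)) ≤ chi (G.induce (A : Set V)) + B.card := by
  classical
  induction B using Finset.induction_on with
  | empty => rw [Finset.union_empty]; simp
  | @insert v B hv ih =>
    have hset : ((A ∪ insert v B : Finset V) : Set V) = insert v ((A ∪ B : Finset V) : Set V) := by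
      push_cast
      rw [Set.union_insert]
    have h1 : (G.induce ((A ∪ insert v B : Finset V) : Set V)).Colorable
        (chi (G.induce ((A ∪ B : Finset V) : Set V)) + 1) := by
      rw [hset]
      exact colorable_induce_insert G _ v (colorable_chi _)
    have h2 := chi_le_of_colorable _ h1
    rw [Finset.card_insert_of_notMem hv]
    omega

open Classical in
theorem stmt0 {V : Type*} [Fintype V] (G : SimpleGraph V) (c : V → ℕ)
    (hc : IsProper G c) :
    ∃ s : Finset V,
      (∀ k ∈ Finset.univ.image c, (s.filter fun v => c v = k).card = 1) ∧
      phiC G c = disc G c s := by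
  classical
  obtain ⟨t, -, ht⟩ := Finset.exists_mem_eq_sup (Finset.univ : Finset (Finset V))
    ⟨∅, Finset.mem_univ _⟩ (disc G c)
  set K := Finset.univ.image c with hK
  have hpick : ∀ k ∈ K, ∃ v : V, c v = k ∧ (k ∈ t.image c → v ∈ t) := by
    intro k hk
    by_cases h : k ∈ t.image c
    · obtain ⟨v, hv, hcv⟩ := Finset.mem_image.mp h
      exact ⟨v, hcv, fun _ => hv⟩
    · obtain ⟨v, -, hcv⟩ := Finset.mem_image.mp hk
      exact ⟨v, hcv, fun hk' => absurd hk' h⟩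
  let f : {k // k ∈ K} → V := fun k => (hpick k.1 k.2).choose
  have hf1 : ∀ k : {k // k ∈ K}, c (f k) = k.1 := fun k => (hpick k.1 k.2).choose_spec.1
  have hf2 : ∀ k : {k // k ∈ K}, k.1 ∈ t.image c → f k ∈ t :=
    fun k => (hpick k.1 k.2).choose_spec.2
  set s : Finset V := K.attach.image f with hs
  have hmem : ∀ v, v ∈ s ↔ ∃ k : {k // k ∈ K}, f k = v := by
    intro v; simp [hs]
  refine ⟨s, ?_, ?_⟩
  · intro k hk
    have : s.filter (fun v => c v = k) = {f ⟨k, hk⟩} := by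
      ext v
      simp only [Finset.mem_filter, Finset.mem_singleton]
      constructor
      · rintro ⟨hv, hcv⟩
        obtain ⟨k', rfl⟩ := (hmem v).mp hv
        have : k'.1 = k := by rw [← hf1 k']; exact hcv
        have : k' = ⟨k, hk⟩ := Subtype.ext this
        rw [this]
      · rintro rfl
        exact ⟨(hmem _).mpr ⟨⟨k, hk⟩, rfl⟩, hf1 _⟩
    rw [this, Finset.card_singleton]
  · -- s.image c = K
    have hsimg : s.image c = K := by
      apply Finset.Subset.antisymm
      · intro k hk
        obtain ⟨v, -, rfl⟩ := Finset.mem_image.mp hk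
        exact Finset.mem_image_of_mem c (Finset.mem_univ v)
      · intro k hk
        exact Finset.mem_image.mpr ⟨f ⟨k, hk⟩, (hmem _).mpr ⟨⟨k, hk⟩, rfl⟩, hf1 _⟩
    have hinj : Set.InjOn c ↑s := by
      intro u hu v hv huv
      obtain ⟨k, rfl⟩ := (hmem u).mp hu
      obtain ⟨k', rfl⟩ := (hmem v).mp hv
      have : k = k' := Subtype.ext (by rw [← hf1 k, ← hf1 k']; exact huv)
      rw [this]
    set s₁ := s.filter (fun v => c v ∈ t.image c) with hs1
    set s₂ := s.filter (fun v => c v ∉ t.image c) with hs2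
    have hsplit : s₁ ∪ s₂ = s := Finset.filter_union_filter_not_eq _ s
    have hsub1 : s₁ ⊆ t := by
      intro v hv
      rw [hs1, Finset.mem_filter] at hv
      obtain ⟨k, rfl⟩ := (hmem v).mp hv.1
      exact hf2 k (by rw [← hf1 k]; exact hv.2)
    have htK : t.image c ⊆ K := by
      intro k hk
      obtain ⟨v, -, rfl⟩ := Finset.mem_image.mp hk
      exact Finset.mem_image_of_mem c (Finset.mem_univ _)
    have hcard2 : s₂.card ≤ K.card - (t.image c).card := by
      have h0 : s₂ ⊆ s := Finset.filter_subset _ s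
      have h1 : s₂.card = (s₂.image c).card :=
        (Finset.card_image_of_injOn (hinj.mono (Finset.coe_subset.mpr h0))).symm
      have h2 : s₂.image c ⊆ K \ t.image c := by
        intro k hk
        obtain ⟨v, hv, rfl⟩ := Finset.mem_image.mp hk
        rw [hs2, Finset.mem_filter] at hv
        exact Finset.mem_sdiff.mpr ⟨Finset.mem_image_of_mem c (Finset.mem_univ _), hv.2⟩
      have h3 : (K \ t.image c).card = K.card - (t.image c).card :=
        Finset.card_sdiff_of_subset htK
      calc s₂.card = (s₂.image c).card := h1
        _ ≤ (K \ t.image c).card := Finset.card_le_card h2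
        _ = K.card - (t.image c).card := h3
    -- chi bound
    have hchi1 : chi (G.induce (s₁ : Set V)) ≤ chi (G.induce (t : Set V)) := by
      apply chi_le_of_colorable
      exact colorable_induce_mono G (by exact_mod_cast hsub1) (colorable_chi _)
    have hchi : chi (G.induce (s : Set V)) ≤ chi (G.induce (t : Set V)) + s₂.card := by
      calc chi (G.induce (s : Set V)) = chi (G.induce ((s₁ ∪ s₂ : Finset V) : Set V)) := by
            rw [hsplit]
        _ ≤ chi (G.induce (s₁ : Set V)) + s₂.card := chi_union_le G s₁ s₂
        _ ≤ chi (G.induce (t : Set V)) + s₂.card := by omega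
    have haK : (t.image c).card ≤ K.card := Finset.card_le_card htK
    have hle1 : disc G c t ≤ disc G c s := by
      unfold disc
      rw [hsimg]
      omega
    have hle2 : disc G c s ≤ phiC G c := Finset.le_sup (Finset.mem_univ s)
    have hphi : phiC G c = disc G c t := by unfold phiC; exact ht
    omega
end

section
/- If I is an independent set in a graph G, then φ(G) ≤ φ(G \ I) + 1, where G \ I denotes the subgraph induced on V(G) - I. -/
open SimpleGraph

lemma chi_mono_of_embedding {W W' : Type*} [Fintype W'] {G : SimpleGraph W}
    {G' : SimpleGraph W'} (f : G ↪g G') : chi G ≤ chi G' := by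
  have h := chromaticNumber_mono_of_hom f.toHom
  have hne : G'.chromaticNumber ≠ ⊤ :=
    chromaticNumber_ne_top_iff_exists.mpr ⟨_, G'.colorable_of_fintype⟩
  exact ENat.toNat_le_toNat h hne

theorem stmt1 {V : Type*} [Fintype V] [DecidableEq V] (G : SimpleGraph V) (I : Finset V)
    (hI : ∀ u ∈ I, ∀ v ∈ I, ¬ G.Adj u v) :
    phi G ≤ phi (G.induce ((Iᶜ : Finset V) : Set V)) + 1 := by
  classical
  set G' := G.induce ((Iᶜ : Finset V) : Set V) with hG'
  -- a proper coloring of G' exists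
  have hne : {n | ∃ c, IsProper G' c ∧ phiC G' c = n}.Nonempty := by
    obtain ⟨e⟩ := Fintype.truncEquivFin ((Iᶜ : Finset V) : Set V)
    refine ⟨_, fun v => (e v : ℕ), fun u v huv h => ?_, rfl⟩
    exact G'.ne_of_adj huv (e.injective (Fin.val_injective h))
  obtain ⟨c', hc'p, hc'⟩ := Nat.sInf_mem hne
  -- extend c' to a coloring of G
  have hmem : ∀ v : V, v ∉ I → v ∈ ((Iᶜ : Finset V) : Set V) := by
    intro v hv; simp [hv]
  set c : V → ℕ := fun v => if h : v ∈ I then 0 else c' ⟨v, hmem v h⟩ + 1 with hc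
  have hcp : IsProper G c := by
    intro u v huv
    by_cases hu : u ∈ I <;> by_cases hv : v ∈ I
    · exact absurd huv (hI u hu v hv)
    · simp [hc, hu, hv]
    · simp [hc, hu, hv]
    · simp only [hc, hu, hv, dif_neg, not_false_iff, Ne, Nat.succ_inj]
      exact hc'p (by simpa [hG', comap_adj] using huv)
  have key : phiC G c ≤ phiC G' c' + 1 := by
    apply Finset.sup_le
    intro s _
    set s' : Finset ((Iᶜ : Finset V) : Set V) :=
      Finset.univ.filter (fun x => x.val ∈ s) with hs'
    -- card bound
    have hcard : (s.image c).card ≤ (s'.image c').card + 1 := by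
      have hsub : s.image c ⊆ insert 0 ((s'.image c').image (· + 1)) := by
        intro n hn
        obtain ⟨v, hvs, hvc⟩ := Finset.mem_image.mp hn
        by_cases hv : v ∈ I
        · simp [← hvc, hc, hv]
        · refine Finset.mem_insert_of_mem ?_
          refine Finset.mem_image.mpr ⟨c' ⟨v, hmem v hv⟩, ?_, by simp [← hvc, hc, hv]⟩
          exact Finset.mem_image.mpr ⟨⟨v, hmem v hv⟩, by simp [hs', hvs], rfl⟩
      calc (s.image c).card ≤ (insert 0 ((s'.image c').image (· + 1))).card :=
            Finset.card_le_card hsub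
        _ ≤ ((s'.image c').image (· + 1)).card + 1 := Finset.card_insert_le _ _
        _ ≤ (s'.image c').card + 1 := by
            exact Nat.add_le_add_right (Finset.card_image_le) 1
    -- chromatic bound
    have hchi : chi (G'.induce (s' : Set _)) ≤ chi (G.induce (s : Set V)) := by
      refine chi_mono_of_embedding ⟨⟨fun x => ⟨x.val.val, ?_⟩, ?_⟩, ?_⟩
      · have := x.2; simp only [hs', Finset.coe_filter, Set.mem_setOf_eq] at this
        exact this.2
      · intro a b hab
        exact Subtype.ext (Subtype.ext (Subtype.mk_eq_mk.mp hab))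
      · intro a b
        exact Iff.rfl
    have h1 : disc G c s ≤ disc G' c' s' + 1 := by
      unfold disc
      omega
    calc disc G c s ≤ disc G' c' s' + 1 := h1
      _ ≤ phiC G' c' + 1 := Nat.add_le_add_right (Finset.le_sup (Finset.mem_univ s')) 1
  calc phi G ≤ phiC G c := Nat.sInf_le ⟨c, hcp, rfl⟩
    _ ≤ phiC G' c' + 1 := key
    _ = phi G' + 1 := by rw [hc']; rfl
end

section
/- If H is an induced subgraph of a graph G, then φ(G) ≤ φ(H) + χ(G \ H), where G \ H is the subgraph induced on V(G) - V(H). -/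
open SimpleGraph

lemma chi_le_of_embedding {A B : Type*} [Fintype B] {G : SimpleGraph A} {G' : SimpleGraph B}
    (f : G ↪g G') : chi G ≤ chi G' := by
  apply ENat.toNat_le_toNat (chromaticNumber_mono_of_hom f.toHom)
  exact ne_top_of_le_ne_top (by simp) G'.colorable_of_fintype.chromaticNumber_le

lemma phi_nonempty {W : Type*} [Fintype W] (G : SimpleGraph W) :
    {n | ∃ c, IsProper G c ∧ phiC G c = n}.Nonempty := by
  classical
  obtain ⟨f⟩ : Nonempty (W ↪ ℕ) :=
    ⟨(Fintype.equivFin W).toEmbedding.trans ⟨Fin.val, Fin.val_injective⟩⟩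
  exact ⟨phiC G f, f, fun u v h => fun he => G.ne_of_adj h (f.injective he), rfl⟩

theorem stmt2 {V : Type*} [Fintype V] [DecidableEq V] (G : SimpleGraph V) (s : Finset V) :
    phi G ≤ phi (G.induce (s : Set V)) + chi (G.induce ((sᶜ : Finset V) : Set V)) := by
  classical
  set H := G.induce (s : Set V) with hH
  set K := G.induce ((sᶜ : Finset V) : Set V) with hK
  set n := chi K with hn
  -- optimal coloring of H
  obtain ⟨cH, hcH, hcHval⟩ := Nat.sInf_mem (phi_nonempty H)
  -- coloring of K with n colors
  obtain ⟨CK⟩ := K.colorable_chromaticNumber_of_fintype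
  set cK : ((sᶜ : Finset V) : Set V) → ℕ := fun v => (CK v : ℕ) with hcK
  have hcKlt : ∀ v, cK v < n := fun v => (CK v).2
  -- combined coloring
  set c : V → ℕ := fun v =>
    if h : v ∈ s then 2 * cH ⟨v, by simpa using h⟩
    else 2 * cK ⟨v, by simp [h]⟩ + 1 with hc
  have hproper : IsProper G c := by
    intro u v hadj he
    by_cases hu : u ∈ s <;> by_cases hv : v ∈ s <;> simp only [hc, hu, hv, dif_pos, dif_neg,
      not_false_iff] at he
    · have : cH ⟨u, by simpa using hu⟩ ≠ cH ⟨v, by simpa using hv⟩ :=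
        hcH hadj
      omega
    · omega
    · omega
    · have hadj' : K.Adj ⟨u, by simp [hu]⟩ ⟨v, by simp [hv]⟩ := hadj
      have : cK ⟨u, by simp [hu]⟩ ≠ cK ⟨v, by simp [hv]⟩ :=
        fun hh => CK.valid hadj' (Fin.val_injective hh)
      omega
  refine le_trans (Nat.sInf_le ⟨c, hproper, rfl⟩) ?_
  unfold phi
  rw [← hcHval]
  apply Finset.sup_le
  intro T _
  -- split T
  set A : Finset ((s : Set V) : Type _) := T.subtype (· ∈ (s : Set V)) with hA
  have himg : (T.image c).card ≤ (A.image cH).card + n := by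
    calc (T.image c).card ≤ ((T ∩ s).image c).card + ((T \ s).image c).card := by
          refine le_trans (Finset.card_le_card ?_) (Finset.card_union_le _ _)
          intro x hx
          obtain ⟨v, hv, rfl⟩ := Finset.mem_image.mp hx
          by_cases hvs : v ∈ s
          · exact Finset.mem_union_left _ (Finset.mem_image_of_mem c (by simp [hv, hvs]))
          · exact Finset.mem_union_right _ (Finset.mem_image_of_mem c (by simp [hv, hvs]))
      _ ≤ (A.image cH).card + n := by
          have h1 : ((T ∩ s).image c).card ≤ (A.image cH).card := by
            have heq : (T ∩ s).image c = (A.image cH).image (fun k => 2 * k) := by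
              ext x
              simp only [Finset.mem_image, Finset.mem_inter, hA, Finset.mem_subtype]
              constructor
              · rintro ⟨v, ⟨hvT, hvs⟩, rfl⟩
                refine ⟨cH ⟨v, by simpa using hvs⟩, ⟨⟨v, by simpa using hvs⟩, by simpa using hvT, rfl⟩, ?_⟩
                simp only [hc]; split
                · rfl
                · exact absurd hvs ‹_›
              · rintro ⟨k, ⟨⟨v, hvs⟩, hvT, rfl⟩, rfl⟩
                refine ⟨v, ⟨hvT, by simpa using hvs⟩, ?_⟩
                exact dif_pos (by simpa using hvs)
            rw [heq]
            exact le_trans Finset.card_image_le le_rfl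
          have h2 : ((T \ s).image c).card ≤ n := by
            have hsub : (T \ s).image c ⊆ (Finset.range n).image (fun k => 2 * k + 1) := by
              intro x hx
              simp only [Finset.mem_image, Finset.mem_sdiff] at hx
              obtain ⟨v, ⟨hvT, hvs⟩, rfl⟩ := hx
              simp only [Finset.mem_image, Finset.mem_range]
              refine ⟨cK ⟨v, by simp [hvs]⟩, hcKlt _, ?_⟩
              simp only [hc]; split
              · exact absurd ‹_› hvs
              · rfl
            calc ((T \ s).image c).card ≤ _ := Finset.card_le_card hsub
              _ ≤ n := le_trans Finset.card_image_le (by simp)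
          exact add_le_add h1 h2
  have hchi : chi (H.induce (A : Set _)) ≤ chi (G.induce (T : Set V)) := by
    apply chi_le_of_embedding
    refine ⟨⟨fun x => ⟨x.1.1, ?_⟩, ?_⟩, ?_⟩
    · have := x.2
      simp only [hA, Finset.mem_coe, Finset.mem_subtype] at this
      exact this
    · intro a b hab
      simp only [Subtype.mk.injEq] at hab
      exact Subtype.ext (Subtype.ext hab)
    · intro a b
      exact Iff.rfl
  have h1 : disc G c T ≤ disc H cH A + n := by
    unfold disc
    omega
  have h2 : disc H cH A ≤ phiC H cH := Finset.le_sup (Finset.mem_univ A)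
  exact le_trans h1 (add_le_add_left h2 n)
end

section
/- For any graph G on n vertices, φ(G) ≤ n - χ(G). -/
open SimpleGraph

/-- Key lemma: a coloring of an induced subgraph extends, so
`χ(G) ≤ χ(G[s]) + (n - |s|)`. -/
lemma chi_le_chi_induce_add {V : Type*} [Fintype V] (G : SimpleGraph V) (s : Finset V) :
    chi G ≤ chi (G.induce (s : Set V)) + (Fintype.card V - s.card) := by
  classical
  set m := chi (G.induce (s : Set V)) with hm
  have hcol : (G.induce (s : Set V)).Colorable m :=
    colorable_chromaticNumber_of_fintype _
  rw [colorable_iff_exists_bdd_nat_coloring] at hcol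
  obtain ⟨C, hC⟩ := hcol
  -- build coloring of G
  let e : {v // v ∈ sᶜ} ≃ Fin (sᶜ : Finset V).card := (sᶜ : Finset V).equivFin
  let f : V → ℕ := fun v =>
    if h : v ∈ s then C ⟨v, by simpa using h⟩
    else m + (e ⟨v, by simpa using h⟩ : ℕ)
  have hvalid : ∀ {u v : V}, G.Adj u v → f u ≠ f v := by
    intro u v huv
    by_cases hu : u ∈ s <;> by_cases hv : v ∈ s <;> simp only [f, hu, hv, dif_pos, dif_neg,
      not_false_iff]
    · intro hcontra
      exact (Coloring.valid C (by exact huv : (G.induce (s : Set V)).Adj ⟨u, by simpa using hu⟩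
        ⟨v, by simpa using hv⟩)) hcontra
    · have := hC ⟨u, by simpa using hu⟩; omega
    · have := hC ⟨v, by simpa using hv⟩; omega
    · intro hcontra
      have : e ⟨u, by simpa using hu⟩ = e ⟨v, by simpa using hv⟩ := by
        apply Fin.ext; omega
      have := congrArg Subtype.val (e.injective this)
      exact G.ne_of_adj huv this
  have hbdd : G.Colorable (m + (sᶜ : Finset V).card) := by
    rw [colorable_iff_exists_bdd_nat_coloring]
    refine ⟨Coloring.mk f hvalid, ?_⟩
    intro v
    show f v < m + (sᶜ : Finset V).card
    simp only [f]
    by_cases h : v ∈ s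
    · rw [dif_pos h]; have := hC ⟨v, by simpa using h⟩; omega
    · rw [dif_neg h]; have := (e ⟨v, by simpa using h⟩).isLt; omega
  have := hbdd.chromaticNumber_le
  have h2 : chi G ≤ m + (sᶜ : Finset V).card := by
    have := ENat.toNat_le_toNat this (by exact_mod_cast WithTop.natCast_ne_top _)
    simpa [chi, ← Nat.cast_add] using this
  rwa [Finset.card_compl] at h2

theorem stmt5 {V : Type*} [Fintype V] (G : SimpleGraph V) :
    phi G ≤ Fintype.card V - chi G := by
  classical
  -- injective coloring
  let c : V → ℕ := fun v => (Fintype.equivFin V v : ℕ)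
  have hinj : Function.Injective c := fun a b h => (Fintype.equivFin V).injective (Fin.ext h)
  have hproper : IsProper G c := fun u v huv h => G.ne_of_adj huv (hinj h)
  have hle : phiC G c ≤ Fintype.card V - chi G := by
    apply Finset.sup_le
    intro s _
    have h1 : (s.image c).card ≤ s.card := Finset.card_image_le
    have h2 := chi_le_chi_induce_add G s
    have h3 : s.card ≤ Fintype.card V := Finset.card_le_univ s
    unfold disc
    omega
  calc phi G ≤ phiC G c := Nat.sInf_le ⟨c, hproper, rfl⟩
    _ ≤ _ := hle
end

section
/- For any graph G, φ(G) ≤ χ(G)·(1 - 1/α(G)), where α(G) is the independence number of G. -/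
open SimpleGraph

lemma indep_le_indepNum' {V : Type*} [Fintype V] (G : SimpleGraph V) (t : Finset V)
    (h : ∀ u ∈ t, ∀ v ∈ t, ¬ G.Adj u v) : t.card ≤ indepNum' G := by
  classical
  unfold indepNum'
  have h' := Finset.le_sup (f := fun s : Finset V =>
    if ∀ u ∈ s, ∀ v ∈ s, ¬ G.Adj u v then s.card else 0) (Finset.mem_univ t)
  simp only [if_pos h] at h'
  exact h'

lemma card_le_chi_mul {V : Type*} [Fintype V] (G : SimpleGraph V) (s : Finset V) :
    s.card ≤ chi (G.induce (s : Set V)) * indepNum' G := by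
  classical
  set H := G.induce (s : Set V) with hH
  obtain ⟨D⟩ : H.Colorable (chi H) := H.colorable_chromaticNumber_of_fintype
  have hcard : s.card = (Finset.univ : Finset ↥(s : Set V)).card := by
    rw [Finset.card_univ]
    simp [Set.toFinset_card]
  rw [hcard]
  rw [Finset.card_eq_sum_card_fiberwise
    (f := D) (t := (Finset.univ : Finset (Fin (chi H)))) (fun x _ => Finset.mem_univ _)]
  have hfib : ∀ i : Fin (chi H),
      (Finset.univ.filter (fun v => D v = i)).card ≤ indepNum' G := by
    intro i
    set t := (Finset.univ.filter (fun v : ↥(s : Set V) => D v = i)).image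
      Subtype.val with ht
    have hc : t.card = (Finset.univ.filter (fun v : ↥(s : Set V) => D v = i)).card :=
      Finset.card_image_of_injective _ Subtype.val_injective
    rw [← hc]
    apply indep_le_indepNum'
    intro u hu v hv hadj
    rw [ht] at hu hv
    obtain ⟨x, hx, rfl⟩ := Finset.mem_image.mp hu
    obtain ⟨y, hy, rfl⟩ := Finset.mem_image.mp hv
    have hxy : H.Adj x y := by simpa [hH] using hadj
    have := D.valid hxy
    simp only [Finset.mem_filter] at hx hy
    exact this (hx.2.trans hy.2.symm)
  calc ∑ i : Fin (chi H), (Finset.univ.filter (fun v => D v = i)).card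
      ≤ ∑ _i : Fin (chi H), indepNum' G := Finset.sum_le_sum (fun i _ => hfib i)
    _ = chi H * indepNum' G := by simp [Finset.sum_const, Finset.card_univ, mul_comm]

theorem stmt6 {V : Type*} [Fintype V] (G : SimpleGraph V) :
    (phi G : ℝ) ≤ (chi G : ℝ) * (1 - 1 / (indepNum' G : ℝ)) := by
  classical
  have hRHS : (0 : ℝ) ≤ (chi G : ℝ) * (1 - 1 / (indepNum' G : ℝ)) := by
    apply mul_nonneg (Nat.cast_nonneg _)
    rcases Nat.eq_zero_or_pos (indepNum' G) with h | h
    · simp [h]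
    · have : (1 : ℝ) ≤ (indepNum' G : ℝ) := by exact_mod_cast h
      have : 1 / (indepNum' G : ℝ) ≤ 1 := by
        rw [div_le_one (by linarith)]; linarith
      linarith
  cases isEmpty_or_nonempty V with
  | inl hE =>
    have hphi : phi G = 0 := by
      have hmem : (0 : ℕ) ∈ {n | ∃ c, IsProper G c ∧ phiC G c = n} := by
        refine ⟨fun _ => 0, fun u => hE.elim u, ?_⟩
        apply Nat.le_antisymm
        · apply Finset.sup_le
          intro s _
          have : s = ∅ := Finset.eq_empty_of_isEmpty s
          simp [this, disc]
        · exact Nat.zero_le _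
      exact Nat.le_antisymm (Nat.sInf_le hmem) (Nat.zero_le _)
    rw [hphi]; simpa using hRHS
  | inr hNE =>
    obtain ⟨v₀⟩ := hNE
    have hα : 1 ≤ indepNum' G := by
      have : ({v₀} : Finset V).card ≤ indepNum' G := by
        apply indep_le_indepNum'
        intro u hu v hv
        simp only [Finset.mem_singleton] at hu hv
        subst hu; subst hv; exact G.irrefl
      simpa using this
    have hαR : (1 : ℝ) ≤ (indepNum' G : ℝ) := by exact_mod_cast hα
    have hαpos : (0 : ℝ) < (indepNum' G : ℝ) := by linarith
    obtain ⟨C⟩ : G.Colorable (chi G) := G.colorable_chromaticNumber_of_fintype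
    set c : V → ℕ := fun v => (C v : ℕ) with hc
    have hproper : IsProper G c := by
      intro u v huv he
      exact C.valid huv (Fin.val_injective he)
    have hle : phi G ≤ phiC G c := Nat.sInf_le ⟨c, hproper, rfl⟩
    have hmain : (phiC G c : ℝ) ≤ (chi G : ℝ) * (1 - 1 / (indepNum' G : ℝ)) := by
      obtain ⟨s, _, hs⟩ := Finset.exists_mem_eq_sup Finset.univ
        ⟨∅, Finset.mem_univ ∅⟩ (disc G c)
      rw [phiC, hs]
      -- bound disc G c s
      set a := (s.image c).card with hadef
      set b := chi (G.induce (s : Set V)) with hbdef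
      have ha : a ≤ chi G := by
        have hsub : s.image c ⊆ Finset.range (chi G) := by
          intro x hx
          obtain ⟨w, _, rfl⟩ := Finset.mem_image.mp hx
          exact Finset.mem_range.mpr (C w).is_lt
        simpa using Finset.card_le_card hsub
      have hab : a ≤ b * indepNum' G :=
        le_trans (Finset.card_image_le) (card_le_chi_mul G s)
      have hdisc : disc G c s = a - b := rfl
      rw [hdisc]
      rcases le_or_gt b a with hba | hba
      · rw [Nat.cast_sub hba]
        have haR : (a : ℝ) ≤ (chi G : ℝ) := by exact_mod_cast ha
        have habR : (a : ℝ) ≤ (b : ℝ) * (indepNum' G : ℝ) := by exact_mod_cast hab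
        have hd : (1 / (indepNum' G : ℝ)) * (indepNum' G : ℝ) = 1 :=
          one_div_mul_cancel (ne_of_gt hαpos)
        have hd0 : (0 : ℝ) ≤ 1 / (indepNum' G : ℝ) := by positivity
        have hd1 : 1 / (indepNum' G : ℝ) ≤ 1 := by
          rw [div_le_one hαpos]; exact hαR
        nlinarith [mul_le_mul_of_nonneg_right habR hd0]
      · rw [Nat.sub_eq_zero_of_le (le_of_lt hba)]
        simpa using hRHS
    calc (phi G : ℝ) ≤ (phiC G c : ℝ) := by exact_mod_cast hle
      _ ≤ _ := hmain
end

section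
/- For any graph G, φ(G) ≥ (χ(H) - ω(H))/2 for every induced subgraph H of G; in particular φ(G) ≥ (χ(G) - ω(G))/2. -/
open SimpleGraph

/-! ### Auxiliary definitions and lemmas -/

open Classical in
/-- clique number of `G` restricted to vertices in `s`. -/
noncomputable def cliqN {V : Type*} [DecidableEq V] (G : SimpleGraph V) (s : Finset V) : ℕ :=
  s.powerset.sup fun t => if G.IsClique (t : Set V) then t.card else 0

open Classical in
lemma cliqN_mono {V : Type*} [DecidableEq V] (G : SimpleGraph V) {s s' : Finset V}
    (h : s ⊆ s') : cliqN G s ≤ cliqN G s' :=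
  Finset.sup_mono (Finset.powerset_mono.mpr h)


lemma le_cliqN {V : Type*} [DecidableEq V] (G : SimpleGraph V) {s t : Finset V}
    (hts : t ⊆ s) (hcl : G.IsClique (t : Set V)) : t.card ≤ cliqN G s := by
  classical
  unfold cliqN
  calc t.card = (if G.IsClique (t : Set V) then t.card else 0) := (if_pos hcl).symm
  _ ≤ _ := Finset.le_sup (f := fun u : Finset V => if G.IsClique (u : Set V) then u.card else 0) (Finset.mem_powerset.mpr hts)

lemma le_cliqueNum' {W : Type*} [Fintype W] (G : SimpleGraph W) {A : Finset W}
    (hcl : G.IsClique (A : Set W)) : A.card ≤ cliqueNum' G := by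
  classical
  unfold cliqueNum'
  calc A.card = (if G.IsClique (A : Set W) then A.card else 0) := (if_pos hcl).symm
  _ ≤ _ := Finset.le_sup (f := fun u : Finset W => if G.IsClique (u : Set W) then u.card else 0) (Finset.mem_univ A)

/-- any proper coloring bounds chi by the number of colors used. -/
lemma chi_le_card_image {W : Type*} [Fintype W] (G : SimpleGraph W) (c : W → ℕ)
    (hc : ∀ ⦃u v⦄, G.Adj u v → c u ≠ c v) :
    chi G ≤ (Finset.univ.image c).card := by
  classical
  have C : G.Coloring {x // x ∈ Finset.univ.image c} :=
    Coloring.mk (fun v => ⟨c v, Finset.mem_image_of_mem c (Finset.mem_univ v)⟩)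
      (fun {u v} h => by simpa [Subtype.ext_iff] using hc h)
  have h1 : G.chromaticNumber ≤ ((Finset.univ.image c).card : ℕ∞) := by
    have := C.colorable.chromaticNumber_le
    simpa using this
  exact ENat.toNat_le_of_le_coe h1

lemma chi_induce_le {V : Type*} [DecidableEq V] (G : SimpleGraph V) (c : V → ℕ)
    (hc : IsProper G c) (s : Finset V) :
    chi (G.induce (s : Set V)) ≤ (s.image c).card := by
  classical
  have h := chi_le_card_image (G.induce (s : Set V)) (fun v => c v)
    (fun u v h => hc h)
  refine h.trans (le_of_eq ?_)
  congr 1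
  ext x
  simp [Finset.mem_image]

/-- Key fact: 2 χ(G[s]) ≤ |s| + ω(G[s]). -/
lemma two_chi_le {V : Type*} [DecidableEq V] (G : SimpleGraph V) (s : Finset V) :
    2 * chi (G.induce (s : Set V)) ≤ s.card + cliqN G s := by
  classical
  induction s using Finset.strongInduction with
  | _ s ih =>
  by_cases hcomp : ∀ u ∈ s, ∀ v ∈ s, u ≠ v → G.Adj u v
  · -- s is a clique
    have hclique : G.IsClique (s : Set V) := fun u hu v hv huv => hcomp u hu v hv huv
    have hω : s.card ≤ cliqN G s := le_cliqN G Finset.Subset.rfl hclique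
    have hchi : chi (G.induce (s : Set V)) ≤ s.card := by
      have hcol := (G.induce (s : Set V)).colorable_of_fintype
      have := hcol.chromaticNumber_le
      have h2 := ENat.toNat_le_of_le_coe this
      simpa [chi] using h2
    omega
  · push_neg at hcomp
    obtain ⟨u, hu, v, hv, huv, hadj⟩ := hcomp
    set s' := (s.erase u).erase v with hs'
    have hss : s' ⊆ s := (Finset.erase_subset _ _).trans (Finset.erase_subset _ _)
    have hssub : s' ⊂ s := by
      refine Finset.ssubset_iff_of_subset hss |>.mpr ⟨u, hu, by simp [hs']⟩
    have hcard : s'.card + 2 = s.card := by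
      have h1 : v ∈ s.erase u := Finset.mem_erase.mpr ⟨Ne.symm huv, hv⟩
      rw [hs', Finset.card_erase_of_mem h1, Finset.card_erase_of_mem hu]
      have : 1 ≤ s.card := Finset.card_pos.mpr ⟨u, hu⟩
      have : 2 ≤ s.card := Finset.one_lt_card.mpr ⟨u, hu, v, hv, huv⟩
      omega
    have IH := ih s' hssub
    -- chi (induce s) ≤ chi (induce s') + 1
    have hstep : chi (G.induce (s : Set V)) ≤ chi (G.induce (s' : Set V)) + 1 := by
      obtain ⟨C⟩ := (G.induce (s' : Set V)).colorable_chromaticNumber_of_fintype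
      set n := chi (G.induce (s' : Set V)) with hn
      have hcol : (G.induce (s : Set V)).Colorable (n + 1) := by
        refine ⟨Coloring.mk (fun x => if h : (x : V) ∈ s' then (C ⟨x, h⟩).castSucc
          else Fin.last n) ?_⟩
        rintro ⟨x, hx⟩ ⟨y, hy⟩ hadjxy
        have hxy : G.Adj x y := hadjxy
        by_cases hx' : x ∈ s' <;> by_cases hy' : y ∈ s'
        · erw [dif_pos hx', dif_pos hy']
          have := C.valid (v := ⟨x, hx'⟩) (w := ⟨y, hy'⟩) hxy
          exact fun h => this (Fin.castSucc_injective _ h)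
        · erw [dif_pos hx', dif_neg hy']
          exact fun h => absurd h (Fin.castSucc_lt_last _).ne
        · erw [dif_neg hx', dif_pos hy']
          exact fun h => absurd h.symm (Fin.castSucc_lt_last _).ne
        · exfalso
          have hxm : x = u ∨ x = v := by
            by_contra hcon
            push_neg at hcon
            exact hx' (Finset.mem_erase.mpr ⟨hcon.2, Finset.mem_erase.mpr ⟨hcon.1, hx⟩⟩)
          have hym : y = u ∨ y = v := by
            by_contra hcon
            push_neg at hcon
            exact hy' (Finset.mem_erase.mpr ⟨hcon.2, Finset.mem_erase.mpr ⟨hcon.1, hy⟩⟩)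
          have hne : x ≠ y := G.ne_of_adj hxy
          rcases hxm with rfl | rfl <;> rcases hym with rfl | rfl
          · exact hne rfl
          · exact hadj hxy
          · exact hadj hxy.symm
          · exact hne rfl
      have := hcol.chromaticNumber_le
      exact ENat.toNat_le_of_le_coe (by exact_mod_cast this)
    have hmono : cliqN G s' ≤ cliqN G s := cliqN_mono G hss
    omega

/-- choose a system of representatives for the colors used in `s`. -/
lemma exists_rainbow {V : Type*} [DecidableEq V] (c : V → ℕ) (s : Finset V) :
    ∃ t : Finset V, t ⊆ s ∧ t.image c = s.image c ∧ t.card = (s.image c).card := by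
  classical
  have hwit : ∀ b : {x // x ∈ s.image c}, ∃ a ∈ s, c a = (b : ℕ) := by
    rintro ⟨b, hb⟩
    simpa using Finset.mem_image.mp hb
  choose f hf1 hf2 using hwit
  refine ⟨(s.image c).attach.image f, ?_, ?_, ?_⟩
  · intro x hx
    obtain ⟨b, _, rfl⟩ := Finset.mem_image.mp hx
    exact hf1 b
  · apply Finset.Subset.antisymm
    · exact Finset.image_subset_image (fun x hx => by
        obtain ⟨b, _, rfl⟩ := Finset.mem_image.mp hx
        exact hf1 b)
    · intro b hb
      refine Finset.mem_image.mpr ⟨f ⟨b, hb⟩, Finset.mem_image_of_mem f (Finset.mem_attach _ _), hf2 ⟨b, hb⟩⟩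
  · rw [Finset.card_image_of_injective _ ?_, Finset.card_attach]
    intro a b hab
    have : (a : ℕ) = (b : ℕ) := by rw [← hf2 a, ← hf2 b, hab]
    exact Subtype.ext this

lemma key_bound {V : Type*} [Fintype V] [DecidableEq V] (G : SimpleGraph V) (c : V → ℕ)
    (hc : IsProper G c) (s : Finset V) :
    (s.image c).card ≤ cliqN G s + 2 * phiC G c := by
  classical
  obtain ⟨t, hts, htim, htc⟩ := exists_rainbow c s
  have hchit : chi (G.induce (t : Set V)) ≤ t.card := by
    have := chi_induce_le G c hc t
    calc chi (G.induce (t : Set V)) ≤ (t.image c).card := this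
    _ ≤ t.card := Finset.card_image_le
  have hdisc : disc G c t = t.card - chi (G.induce (t : Set V)) := by
    rw [disc, htim, ← htc]
  have hdisc' : t.card = chi (G.induce (t : Set V)) + disc G c t := by
    rw [hdisc]; omega
  have h2 := two_chi_le G t
  have hdiscle : disc G c t ≤ phiC G c := Finset.le_sup (Finset.mem_univ t)
  have hmono : cliqN G t ≤ cliqN G s := cliqN_mono G hts
  omega

lemma cliqueNum'_induce_eq {V : Type*} [DecidableEq V] (G : SimpleGraph V) (s : Finset V) :
    cliqueNum' (G.induce (s : Set V)) = cliqN G s := by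
  classical
  apply le_antisymm
  · rw [cliqueNum']
    apply Finset.sup_le
    intro A _
    by_cases hA : (G.induce (s : Set V)).IsClique (A : Set ↑(s : Set V))
    · rw [if_pos hA]
      set t : Finset V := A.map (Function.Embedding.subtype _) with ht
      have hts : t ⊆ s := by
        intro x hx
        obtain ⟨a, _, rfl⟩ := Finset.mem_map.mp hx
        exact a.2
      have hcl : G.IsClique (t : Set V) := by
        intro x hx y hy hxy
        simp only [ht, Finset.coe_map, Set.mem_image] at hx hy
        obtain ⟨a, ha, rfl⟩ := hx
        obtain ⟨b, hb, rfl⟩ := hy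
        have hab : a ≠ b := fun h => hxy (by rw [h])
        exact hA ha hb hab
      have h := le_cliqN G hts hcl
      simpa [ht] using h
    · rw [if_neg hA]; exact Nat.zero_le _
  · rw [cliqN]
    apply Finset.sup_le
    intro t htmem
    have hts : t ⊆ s := Finset.mem_powerset.mp htmem
    by_cases hcl : G.IsClique (t : Set V)
    · rw [if_pos hcl]
      have hemb : ∀ x : ↑t, (x : V) ∈ (s : Set V) := fun x => hts x.2
      set A : Finset ↑(s : Set V) :=
        t.attach.map ⟨fun x => (⟨x.1, hemb x⟩ : ↑(s : Set V)),
          by intro a b h; exact Subtype.ext (by have := congrArg Subtype.val h; exact this)⟩ with hA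
      have hcard : A.card = t.card := by
        rw [hA, Finset.card_map, Finset.card_attach]
      have hAcl : (G.induce (s : Set V)).IsClique (A : Set ↑(s : Set V)) := by
        intro x hx y hy hxy
        simp only [hA, Finset.coe_map, Set.mem_image, Function.Embedding.coeFn_mk] at hx hy
        obtain ⟨a, _, rfl⟩ := hx
        obtain ⟨b, _, rfl⟩ := hy
        have hab : (a : V) ≠ (b : V) := fun h => hxy (Subtype.ext h)
        exact hcl a.2 b.2 hab
      have h := le_cliqueNum' (G.induce (s : Set V)) hAcl
      omega
    · rw [if_neg hcl]; exact Nat.zero_le _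

theorem stmt8 {V : Type*} [Fintype V] (G : SimpleGraph V) :
    (∀ s : Finset V,
      ((chi (G.induce (s : Set V)) : ℝ) - (cliqueNum' (G.induce (s : Set V)) : ℝ)) / 2
        ≤ (phi G : ℝ)) ∧
    ((chi G : ℝ) - (cliqueNum' G : ℝ)) / 2 ≤ (phi G : ℝ) := by
  classical
  -- the set defining phi is nonempty
  have hne : {n | ∃ c, IsProper G c ∧ phiC G c = n}.Nonempty := by
    refine ⟨phiC G (fun v => (Fintype.equivFin V v : ℕ)), fun v => (Fintype.equivFin V v : ℕ), ?_, rfl⟩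
    intro u v h hcontra
    exact G.ne_of_adj h ((Fintype.equivFin V).injective (Fin.val_injective hcontra))
  obtain ⟨c, hc, hphic'⟩ := Nat.sInf_mem hne
  have hphic : phiC G c = phi G := hphic'
  have main : ∀ s : Finset V, chi (G.induce (s : Set V)) ≤ cliqN G s + 2 * phi G := by
    intro s
    have h1 := chi_induce_le G c hc s
    have h2 := key_bound G c hc s
    rw [hphic] at h2
    omega
  have mainG : chi G ≤ cliqN G Finset.univ + 2 * phi G := by
    have h1 := chi_le_card_image G c hc
    have h2 := key_bound G c hc Finset.univ
    rw [hphic] at h2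
    omega
  have hcliqG : cliqueNum' G = cliqN G Finset.univ := by
    unfold cliqueNum' cliqN
    apply Finset.sup_congr
    · ext t; simp
    · intros; rfl
  constructor
  · intro s
    have := main s
    rw [cliqueNum'_induce_eq]
    have h : (chi (G.induce (s : Set V)) : ℝ) ≤ (cliqN G s : ℝ) + 2 * (phi G : ℝ) := by
      exact_mod_cast this
    linarith
  · have h : (chi G : ℝ) ≤ (cliqueNum' G : ℝ) + 2 * (phi G : ℝ) := by
      rw [hcliqG]; exact_mod_cast mainG
    linarith
end

section
/- Let G be a graph with maximum degree Δ, independence number α ≥ 2Δ, and chromatic number χ. Then φ(G) ≥ (n - (2Δ - 1)(χ - 1))/α - 1, where n = |V(G)|. -/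
open SimpleGraph

section Haxell

variable {W : Type*} [Fintype W] [DecidableEq W]

/-- An independent transversal (as a choice function) of the classes `C i`, `i ∈ S`. -/
def ITfun (G : SimpleGraph W) (C : ℕ → Finset W) (S : Finset ℕ) : Prop :=
  ∃ f : ℕ → W, (∀ i ∈ S, f i ∈ C i) ∧ ∀ i ∈ S, ∀ j ∈ S, i ≠ j → ¬ G.Adj (f i) (f j)

/-- Key lemma (rooted form of Haxell's lemma): if a family of pairwise disjoint classes
has no independent transversal, but the family without the root class `ρ` has one,
then there is a set `T ∋ ρ` of classes and a set `F` of edges, `|F| ≤ |T| - 1`, such that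
every vertex of every class of `T` is adjacent to an endpoint of an edge of `F`. -/
lemma rootM : ∀ (n : ℕ) (G : SimpleGraph W) (C : ℕ → Finset W) (S : Finset ℕ) (ρ : ℕ),
    S.card * (Fintype.card (Sym2 W) + 1) + G.edgeSet.ncard ≤ n →
    ρ ∈ S →
    (∀ i ∈ S, ∀ j ∈ S, i ≠ j → Disjoint (C i) (C j)) →
    ¬ ITfun G C S →
    ITfun G C (S.erase ρ) →
    ∃ (T : Finset ℕ) (F : Finset (W × W)),
      ρ ∈ T ∧ T ⊆ S ∧ F.card + 1 ≤ T.card ∧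
      (∀ p ∈ F, G.Adj p.1 p.2) ∧
      (∀ i ∈ T, ∀ w ∈ C i, ∃ p ∈ F, G.Adj w p.1 ∨ G.Adj w p.2) := by
  intro n
  induction n using Nat.strong_induction_on with
  | _ n IH =>
    intro G C S ρ hn hρS hdisj hno hcrit
    classical
    by_cases hCρ : C ρ = ∅
    · refine ⟨{ρ}, ∅, by simp, by simpa using hρS, by simp, by simp, ?_⟩
      intro i hi w hw
      rw [Finset.mem_singleton] at hi
      subst hi
      rw [hCρ] at hw
      simp at hw
    · obtain ⟨x₀, hx₀⟩ := Finset.nonempty_iff_ne_empty.2 hCρ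
      obtain ⟨f, hfmem, hfind⟩ := hcrit
      have hblock : ∃ i₁ ∈ S.erase ρ, G.Adj x₀ (f i₁) := by
        by_contra hcon
        push_neg at hcon
        apply hno
        refine ⟨fun i => if i = ρ then x₀ else f i, ?_, ?_⟩
        · intro i hi
          by_cases h : i = ρ
          · subst h; simpa using hx₀
          · simp only [if_neg h]
            exact hfmem i (Finset.mem_erase.2 ⟨h, hi⟩)
        · intro i hi j hj hij
          by_cases h1 : i = ρ <;> by_cases h2 : j = ρ
          · exact absurd (h1.trans h2.symm) hij
          · subst h1
            simp only [if_pos rfl, if_neg h2]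
            exact hcon j (Finset.mem_erase.2 ⟨h2, hj⟩)
          · subst h2
            simp only [if_pos rfl, if_neg h1]
            intro had
            exact (hcon i (Finset.mem_erase.2 ⟨h1, hi⟩)) had.symm
          · simp only [if_neg h1, if_neg h2]
            exact hfind i (Finset.mem_erase.2 ⟨h1, hi⟩) j (Finset.mem_erase.2 ⟨h2, hj⟩) hij
      obtain ⟨i₁, hi₁, hadj⟩ := hblock
      have hy₀ : f i₁ ∈ C i₁ := hfmem i₁ hi₁
      set y₀ := f i₁ with hy₀def
      have hi₁ρ : i₁ ≠ ρ := (Finset.mem_erase.1 hi₁).1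
      have hi₁S : i₁ ∈ S := (Finset.mem_erase.1 hi₁).2
      by_cases hIT' : ITfun (G.deleteEdges {s(x₀, y₀)}) C S
      case neg =>
        -- recurse on the graph with the edge removed
        have he₀ : s(x₀, y₀) ∈ G.edgeSet := by rwa [SimpleGraph.mem_edgeSet]
        have h1 : (G.deleteEdges {s(x₀, y₀)}).edgeSet.ncard < G.edgeSet.ncard := by
          apply Set.ncard_lt_ncard _ (G.edgeSet.toFinite)
          rw [SimpleGraph.edgeSet_deleteEdges]
          constructor
          · exact Set.diff_subset
          · intro hsub
            have h2 : s(x₀, y₀) ∈ G.edgeSet \ {s(x₀, y₀)} := hsub he₀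
            simp at h2
        have hlt : S.card * (Fintype.card (Sym2 W) + 1)
            + (G.deleteEdges {s(x₀, y₀)}).edgeSet.ncard < n := by omega
        obtain ⟨T, F, h1, h2, h3, h4, h5⟩ := IH _ hlt (G.deleteEdges {s(x₀, y₀)}) C S ρ
          le_rfl hρS hdisj hIT'
          ⟨f, hfmem, fun i hi j hj hij had =>
            hfind i hi j hj hij (SimpleGraph.deleteEdges_le _ had)⟩
        refine ⟨T, F, h1, h2, h3, fun p hp => SimpleGraph.deleteEdges_le _ (h4 p hp), ?_⟩
        intro i hi w hw
        obtain ⟨p, hp, hor⟩ := h5 i hi w hw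
        exact ⟨p, hp, hor.imp (fun h => SimpleGraph.deleteEdges_le _ h)
          (fun h => SimpleGraph.deleteEdges_le _ h)⟩
      case pos =>
        obtain ⟨g, hgmem, hgind⟩ := hIT'
        -- locate the conflict of g in G
        have hconf : ∃ a ∈ S, ∃ b ∈ S, a ≠ b ∧ g a = x₀ ∧ g b = y₀ := by
          have h0 : ∃ i ∈ S, ∃ j ∈ S, i ≠ j ∧ G.Adj (g i) (g j) := by
            by_contra hcon
            push_neg at hcon
            exact hno ⟨g, hgmem, fun i hi j hj hij => hcon i hi j hj hij⟩
          obtain ⟨i, hiS, j, hjS, hij, hadjij⟩ := h0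
          have hne : ¬ (G.deleteEdges {s(x₀, y₀)}).Adj (g i) (g j) := hgind i hiS j hjS hij
          rw [SimpleGraph.deleteEdges_adj] at hne
          push_neg at hne
          have hmem := hne hadjij
          rw [Set.mem_singleton_iff, Sym2.eq_iff] at hmem
          rcases hmem with ⟨ha, hb⟩ | ⟨ha, hb⟩
          · exact ⟨i, hiS, j, hjS, hij, ha, hb⟩
          · exact ⟨j, hjS, i, hiS, hij.symm, hb, ha⟩
        obtain ⟨a, haS, b, hbS, hab, hax, hby⟩ := hconf
        have hloc : ∀ u ∈ S, g u = x₀ → u = ρ := by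
          intro u huS hu
          by_contra huρ
          exact Finset.disjoint_left.1 (hdisj u huS ρ hρS huρ)
            (hu ▸ hgmem u huS) hx₀
        have hloc' : ∀ u ∈ S, g u = y₀ → u = i₁ := by
          intro u huS hu
          by_contra hui
          exact Finset.disjoint_left.1 (hdisj u huS i₁ hi₁S hui)
            (hu ▸ hgmem u huS) hy₀
        have hgρ : g ρ = x₀ := by rwa [hloc a haS hax] at hax
        have hgi₁ : g i₁ = y₀ := by rwa [hloc' b hbS hby] at hby
        -- P3 : no G-conflicts among g except at the pair (ρ, i₁)
        have hP3 : ∀ u ∈ S, ∀ v ∈ S, u ≠ v → ¬(u = ρ ∧ v = i₁) → ¬(u = i₁ ∧ v = ρ) →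
            ¬ G.Adj (g u) (g v) := by
          intro u hu v hv huv h1 h2 had
          have hne : ¬ (G.deleteEdges {s(x₀, y₀)}).Adj (g u) (g v) := hgind u hu v hv huv
          rw [SimpleGraph.deleteEdges_adj] at hne
          push_neg at hne
          have hmem := hne had
          rw [Set.mem_singleton_iff, Sym2.eq_iff] at hmem
          rcases hmem with ⟨ha, hb⟩ | ⟨ha, hb⟩
          · exact h1 ⟨hloc u hu ha, hloc' v hv hb⟩
          · exact h2 ⟨hloc' u hu ha, hloc v hv hb⟩
        set D : Finset W := Finset.univ.filter (fun w => G.Adj w x₀ ∨ G.Adj w y₀) with hD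
        have hDmem : ∀ w, w ∈ D ↔ (G.Adj w x₀ ∨ G.Adj w y₀) := by
          intro w; simp [hD]
        set C' : ℕ → Finset W := fun jj => if jj = ρ then (C ρ ∪ C i₁) \ D else C jj \ D with hC'
        set S' := S.erase i₁ with hS'
        have hρS' : ρ ∈ S' := Finset.mem_erase.2 ⟨hi₁ρ.symm, hρS⟩
        -- measure decreases
        have hElt : G.edgeSet.ncard ≤ Fintype.card (Sym2 W) := by
          have h := Set.ncard_le_ncard (Set.subset_univ G.edgeSet) (Set.toFinite _)
          simpa [Set.ncard_univ, Nat.card_eq_fintype_card] using h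
        have hcardS : S'.card < S.card := Finset.card_erase_lt_of_mem hi₁S
        have hlt : S'.card * (Fintype.card (Sym2 W) + 1) + G.edgeSet.ncard < n := by
          have h2 : S'.card * (Fintype.card (Sym2 W) + 1) + (Fintype.card (Sym2 W) + 1)
              ≤ S.card * (Fintype.card (Sym2 W) + 1) := by
            calc S'.card * (Fintype.card (Sym2 W) + 1) + (Fintype.card (Sym2 W) + 1)
                = (S'.card + 1) * (Fintype.card (Sym2 W) + 1) := by ring
              _ ≤ S.card * (Fintype.card (Sym2 W) + 1) :=
                  Nat.mul_le_mul_right _ hcardS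
          omega
        -- disjointness for the merged family
        have hdisjCC : ∀ u ∈ S, ∀ v ∈ S, u ≠ v → ∀ c, c ∈ C u → c ∈ C v → False := by
          intro u hu v hv huv c hcu hcv
          exact Finset.disjoint_left.1 (hdisj u hu v hv huv) hcu hcv
        have hdisj' : ∀ u ∈ S', ∀ v ∈ S', u ≠ v → Disjoint (C' u) (C' v) := by
          intro u hu v hv huv
          rw [Finset.disjoint_left]
          intro c hc hcv
          have huS := Finset.mem_of_mem_erase hu
          have hvS := Finset.mem_of_mem_erase hv
          have hui₁ : u ≠ i₁ := Finset.ne_of_mem_erase hu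
          have hvi₁ : v ≠ i₁ := Finset.ne_of_mem_erase hv
          by_cases h1 : u = ρ <;> by_cases h2 : v = ρ
          · exact huv (h1.trans h2.symm)
          · subst h1
            simp only [hC', if_pos rfl, if_neg h2, Finset.mem_sdiff, Finset.mem_union]
              at hc hcv
            rcases hc.1 with h | h
            · exact hdisjCC u hρS v hvS (Ne.symm h2) c h hcv.1
            · exact hdisjCC i₁ hi₁S v hvS (fun he => hvi₁ he.symm) c h hcv.1
          · subst h2
            simp only [hC', if_pos rfl, if_neg h1, Finset.mem_sdiff, Finset.mem_union]
              at hc hcv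
            rcases hcv.1 with h | h
            · exact hdisjCC u huS v hρS h1 c hc.1 h
            · exact hdisjCC u huS i₁ hi₁S hui₁ c hc.1 h
          · simp only [hC', if_neg h1, if_neg h2, Finset.mem_sdiff] at hc hcv
            exact hdisjCC u huS v hvS huv c hc.1 hcv.1
        -- the merged family has no independent transversal
        have hno' : ¬ ITfun G C' S' := by
          rintro ⟨h, hhmem, hhind⟩
          have havoid : ∀ jj ∈ S', ¬ G.Adj (h jj) x₀ ∧ ¬ G.Adj (h jj) y₀ := by
            intro jj hjj
            have hm := hhmem jj hjj
            by_cases hj : jj = ρ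
            · subst hj
              simp only [hC', if_pos rfl, Finset.mem_sdiff] at hm
              have := hm.2
              rw [hDmem] at this
              tauto
            · simp only [hC', if_neg hj, Finset.mem_sdiff] at hm
              have := hm.2
              rw [hDmem] at this
              tauto
          have hρval := hhmem ρ hρS'
          simp only [hC', if_pos rfl, Finset.mem_sdiff, Finset.mem_union] at hρval
          rcases hρval.1 with hw | hw
          · -- h ρ ∈ C ρ : complete with y₀ for class i₁
            apply hno
            refine ⟨fun jj => if jj = i₁ then y₀ else h jj, ?_, ?_⟩
            · intro jj hjj
              by_cases hj : jj = i₁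
              · subst hj; simpa using hy₀
              · have hjj' : jj ∈ S' := Finset.mem_erase.2 ⟨hj, hjj⟩
                simp only [if_neg hj]
                by_cases hjρ : jj = ρ
                · subst hjρ; exact hw
                · have hm := hhmem jj hjj'
                  simp only [hC', if_neg hjρ, Finset.mem_sdiff] at hm
                  exact hm.1
            · intro u hu v hv huv
              by_cases h1 : u = i₁ <;> by_cases h2 : v = i₁
              · exact absurd (h1.trans h2.symm) huv
              · subst h1
                simp only [if_pos rfl, if_neg h2]
                intro had
                exact (havoid v (Finset.mem_erase.2 ⟨h2, hv⟩)).2 had.symm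
              · subst h2
                simp only [if_pos rfl, if_neg h1]
                intro had
                exact (havoid u (Finset.mem_erase.2 ⟨h1, hu⟩)).2 had
              · simp only [if_neg h1, if_neg h2]
                exact hhind u (Finset.mem_erase.2 ⟨h1, hu⟩) v (Finset.mem_erase.2 ⟨h2, hv⟩) huv
          · -- h ρ ∈ C i₁ : use x₀ for ρ and h ρ for i₁
            apply hno
            refine ⟨fun jj => if jj = i₁ then h ρ else if jj = ρ then x₀ else h jj, ?_, ?_⟩
            · intro jj hjj
              by_cases hj : jj = i₁
              · subst hj; simpa using hw
              · simp only [if_neg hj]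
                by_cases hjρ : jj = ρ
                · subst hjρ; simpa using hx₀
                · simp only [if_neg hjρ]
                  have hm := hhmem jj (Finset.mem_erase.2 ⟨hj, hjj⟩)
                  simp only [hC', if_neg hjρ, Finset.mem_sdiff] at hm
                  exact hm.1
            · intro u hu v hv huv
              have hadj' : ∀ z ∈ S', ¬ G.Adj x₀ (h z) := by
                intro z hz had
                exact (havoid z hz).1 had.symm
              by_cases h1 : u = i₁ <;> by_cases h2 : v = i₁
              · exact absurd (h1.trans h2.symm) huv
              · subst h1
                simp only [if_pos rfl, if_neg h2]
                by_cases h2ρ : v = ρ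
                · subst h2ρ
                  simp only [if_pos rfl]
                  intro had
                  exact (havoid v hρS').1 had
                · simp only [if_neg h2ρ]
                  exact hhind ρ hρS' v (Finset.mem_erase.2 ⟨h2, hv⟩) (Ne.symm h2ρ)
              · subst h2
                simp only [if_pos rfl, if_neg h1]
                by_cases h1ρ : u = ρ
                · subst h1ρ
                  simp only [if_pos rfl]
                  intro had
                  exact (havoid u hρS').1 had.symm
                · simp only [if_neg h1ρ]
                  intro had
                  exact hhind ρ hρS' u (Finset.mem_erase.2 ⟨h1, hu⟩) (Ne.symm h1ρ) had.symm
              · simp only [if_neg h1, if_neg h2]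
                by_cases h1ρ : u = ρ <;> by_cases h2ρ : v = ρ
                · exact absurd (h1ρ.trans h2ρ.symm) huv
                · subst h1ρ
                  simp only [if_pos rfl, if_neg h2ρ]
                  exact hadj' v (Finset.mem_erase.2 ⟨h2, hv⟩)
                · subst h2ρ
                  simp only [if_pos rfl, if_neg h1ρ]
                  intro had
                  exact hadj' u (Finset.mem_erase.2 ⟨h1, hu⟩) had.symm
                · simp only [if_neg h1ρ, if_neg h2ρ]
                  exact hhind u (Finset.mem_erase.2 ⟨h1, hu⟩) v (Finset.mem_erase.2 ⟨h2, hv⟩) huv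
        -- criticality for the merged family
        have hcrit' : ITfun G C' (S'.erase ρ) := by
          refine ⟨g, ?_, ?_⟩
          · intro jj hjj
            have hjρ : jj ≠ ρ := Finset.ne_of_mem_erase hjj
            have hjj1 : jj ∈ S' := Finset.mem_of_mem_erase hjj
            have hji₁ : jj ≠ i₁ := Finset.ne_of_mem_erase hjj1
            have hjjS : jj ∈ S := Finset.mem_of_mem_erase hjj1
            simp only [hC', if_neg hjρ, Finset.mem_sdiff]
            refine ⟨hgmem jj hjjS, ?_⟩
            rw [hDmem]
            push_neg
            constructor
            · rw [← hgρ]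
              exact hP3 jj hjjS ρ hρS hjρ (fun hc => hjρ hc.1) (fun hc => hji₁ hc.1)
            · rw [← hgi₁]
              exact hP3 jj hjjS i₁ hi₁S hji₁ (fun hc => hjρ hc.1) (fun hc => hji₁ hc.1)
          · intro u hu v hv huv
            have huρ : u ≠ ρ := Finset.ne_of_mem_erase hu
            have hu1 : u ∈ S' := Finset.mem_of_mem_erase hu
            have hui₁ : u ≠ i₁ := Finset.ne_of_mem_erase hu1
            have huS : u ∈ S := Finset.mem_of_mem_erase hu1
            have hvρ : v ≠ ρ := Finset.ne_of_mem_erase hv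
            have hv1 : v ∈ S' := Finset.mem_of_mem_erase hv
            have hvi₁ : v ≠ i₁ := Finset.ne_of_mem_erase hv1
            have hvS : v ∈ S := Finset.mem_of_mem_erase hv1
            exact hP3 u huS v hvS huv (fun hc => huρ hc.1) (fun hc => hui₁ hc.1)
        obtain ⟨T', F', hT'ρ, hT'sub, hT'card, hF'adj, hF'cov⟩ :=
          IH _ hlt G C' S' ρ le_rfl hρS' hdisj' hno' hcrit'
        have hi₁T' : i₁ ∉ T' := fun hc => (Finset.ne_of_mem_erase (hT'sub hc)) rfl
        refine ⟨insert i₁ T', insert (x₀, y₀) F', Finset.mem_insert_of_mem hT'ρ, ?_, ?_, ?_, ?_⟩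
        · intro z hz
          rcases Finset.mem_insert.1 hz with h | h
          · subst h; exact hi₁S
          · exact Finset.mem_of_mem_erase (hT'sub h)
        · rw [Finset.card_insert_of_notMem hi₁T']
          have := Finset.card_insert_le (x₀, y₀) F'
          omega
        · intro p hp
          rcases Finset.mem_insert.1 hp with h | h
          · subst h; exact hadj
          · exact hF'adj p h
        · intro i hi w hw
          by_cases hwD : w ∈ D
          · refine ⟨(x₀, y₀), Finset.mem_insert_self _ _, ?_⟩
            rw [hDmem] at hwD
            exact hwD
          · rcases Finset.mem_insert.1 hi with h | h
            · subst h
              have hw' : w ∈ C' ρ := by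
                simp only [hC', if_pos rfl, Finset.mem_sdiff, Finset.mem_union]
                exact ⟨Or.inr hw, hwD⟩
              obtain ⟨p, hp, ho⟩ := hF'cov ρ hT'ρ w hw'
              exact ⟨p, Finset.mem_insert_of_mem hp, ho⟩
            · by_cases hiρ : i = ρ
              · subst hiρ
                have hw' : w ∈ C' i := by
                  simp only [hC', if_pos rfl, Finset.mem_sdiff, Finset.mem_union]
                  exact ⟨Or.inl hw, hwD⟩
                obtain ⟨p, hp, ho⟩ := hF'cov i hT'ρ w hw'
                exact ⟨p, Finset.mem_insert_of_mem hp, ho⟩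
              · have hw' : w ∈ C' i := by
                  simp only [hC', if_neg hiρ, Finset.mem_sdiff]
                  exact ⟨hw, hwD⟩
                obtain ⟨p, hp, ho⟩ := hF'cov i h w hw'
                exact ⟨p, Finset.mem_insert_of_mem hp, ho⟩

end Haxell

/-- Haxell's theorem: classes of size `≥ 2Δ` admit an independent transversal. -/
lemma haxell_IT {V : Type*} [Fintype V] [DecidableEq V] [Nonempty V]
    (G : SimpleGraph V) [DecidableRel G.Adj] (hd : 1 ≤ G.maxDegree)
    (C : ℕ → Finset V) (B : Finset ℕ)
    (hdisj : ∀ i ∈ B, ∀ j ∈ B, i ≠ j → Disjoint (C i) (C j))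
    (hsize : ∀ i ∈ B, 2 * G.maxDegree ≤ (C i).card) :
    ITfun G C B := by
  classical
  by_contra hno
  have hBbad : B ∈ B.powerset.filter (fun A => ¬ ITfun G C A) := by
    simp only [Finset.mem_filter, Finset.mem_powerset]
    exact ⟨Finset.Subset.refl _, hno⟩
  obtain ⟨T₀, hT₀mem, hT₀min⟩ := Finset.exists_min_image
    (B.powerset.filter (fun A => ¬ ITfun G C A)) Finset.card ⟨B, hBbad⟩
  rw [Finset.mem_filter, Finset.mem_powerset] at hT₀mem
  obtain ⟨hT₀sub, hT₀bad⟩ := hT₀mem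
  have hT₀ne : T₀.Nonempty := by
    rcases Finset.eq_empty_or_nonempty T₀ with h | h
    · exfalso
      apply hT₀bad
      subst h
      exact ⟨fun _ => Classical.arbitrary V, by simp, by simp⟩
    · exact h
  obtain ⟨ρ, hρ⟩ := hT₀ne
  have hcrit : ITfun G C (T₀.erase ρ) := by
    by_contra hbad
    have hmem2 : T₀.erase ρ ∈ B.powerset.filter (fun A => ¬ ITfun G C A) := by
      rw [Finset.mem_filter, Finset.mem_powerset]
      exact ⟨(Finset.erase_subset _ _).trans hT₀sub, hbad⟩
    have h1 := hT₀min _ hmem2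
    have h2 := Finset.card_erase_lt_of_mem hρ
    omega
  obtain ⟨T, F, hTρ, hTsub, hcard, hFadj, hFcov⟩ := rootM _ G C T₀ ρ le_rfl hρ
    (fun i hi j hj hij => hdisj i (hT₀sub hi) j (hT₀sub hj) hij) hT₀bad hcrit
  set d := G.maxDegree with hdd
  have hTne : 1 ≤ T.card := Finset.card_pos.2 ⟨ρ, hTρ⟩
  have hTB : T ⊆ B := fun z hz => hT₀sub (hTsub hz)
  have hcover : T.biUnion C ⊆ F.biUnion (fun p => G.neighborFinset p.1 ∪ G.neighborFinset p.2) := by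
    intro w hw
    obtain ⟨i, hi, hwi⟩ := Finset.mem_biUnion.1 hw
    obtain ⟨p, hp, ho⟩ := hFcov i hi w hwi
    refine Finset.mem_biUnion.2 ⟨p, hp, ?_⟩
    rcases ho with h | h
    · exact Finset.mem_union_left _ (by rw [SimpleGraph.mem_neighborFinset]; exact h.symm)
    · exact Finset.mem_union_right _ (by rw [SimpleGraph.mem_neighborFinset]; exact h.symm)
  have h1 : 2 * d * T.card ≤ (T.biUnion C).card := by
    rw [Finset.card_biUnion (fun i hi j hj hij => hdisj i (hTB hi) j (hTB hj) hij)]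
    calc 2 * d * T.card = ∑ _i ∈ T, 2 * d := by rw [Finset.sum_const, smul_eq_mul]; ring
      _ ≤ ∑ i ∈ T, (C i).card := Finset.sum_le_sum (fun i hi => hsize i (hTB hi))
  have h2 : (F.biUnion fun p => G.neighborFinset p.1 ∪ G.neighborFinset p.2).card
      ≤ F.card * (2 * d) := by
    refine le_trans Finset.card_biUnion_le ?_
    have h3 : ∀ p ∈ F, (G.neighborFinset p.1 ∪ G.neighborFinset p.2).card ≤ 2 * d := by
      intro p _
      calc (G.neighborFinset p.1 ∪ G.neighborFinset p.2).card
          ≤ (G.neighborFinset p.1).card + (G.neighborFinset p.2).card :=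
            Finset.card_union_le _ _
        _ ≤ d + d := add_le_add (G.degree_le_maxDegree _) (G.degree_le_maxDegree _)
        _ = 2 * d := by ring
    calc ∑ p ∈ F, (G.neighborFinset p.1 ∪ G.neighborFinset p.2).card
        ≤ ∑ _p ∈ F, 2 * d := Finset.sum_le_sum h3
      _ = F.card * (2 * d) := by rw [Finset.sum_const, smul_eq_mul]
  have h3 := Finset.card_le_card hcover
  have hfin : 2 * d * T.card ≤ F.card * (2 * d) := le_trans h1 (le_trans h3 h2)
  have h4 : F.card * (2 * d) ≤ (T.card - 1) * (2 * d) :=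
    Nat.mul_le_mul_right _ (by omega)
  have h5 : T.card * (2 * d) ≤ (T.card - 1) * (2 * d) := by
    calc T.card * (2 * d) = 2 * d * T.card := by ring
      _ ≤ (T.card - 1) * (2 * d) := le_trans hfin h4
  have h6 : T.card ≤ T.card - 1 := Nat.le_of_mul_le_mul_right h5 (by omega)
  omega

lemma colorable_induce_of_colorable {X : Type*} (H : SimpleGraph X) (s : Set X) {m : ℕ}
    (h : H.Colorable m) : (H.induce s).Colorable m := by
  obtain ⟨col⟩ := h
  exact ⟨SimpleGraph.Coloring.mk (fun v => col v.1) (fun hab => col.valid hab)⟩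

lemma chi_le_of_colorable_s10 {X : Type*} (H : SimpleGraph X) {m : ℕ} (h : H.Colorable m) :
    chi H ≤ m := by
  have h1 : H.chromaticNumber ≤ (m : ℕ∞) := h.chromaticNumber_le
  have h2 := ENat.toNat_le_toNat h1 (by simp)
  simpa [chi] using h2

lemma card_le_indepNum' {V : Type*} [Fintype V] (G : SimpleGraph V) (s : Finset V)
    (h : ∀ u ∈ s, ∀ v ∈ s, ¬ G.Adj u v) : s.card ≤ indepNum' G := by
  classical
  unfold indepNum'
  refine le_trans ?_ (Finset.le_sup (Finset.mem_univ s))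
  rw [if_pos h]


theorem stmt10 {V : Type*} [Fintype V] (G : SimpleGraph V) [DecidableRel G.Adj]
    (hα : 2 * G.maxDegree ≤ indepNum' G) :
    ((Fintype.card V : ℝ) - (2 * (G.maxDegree : ℝ) - 1) * ((chi G : ℝ) - 1))
        / (indepNum' G : ℝ) - 1 ≤ (phi G : ℝ) := by
  classical
  rcases isEmpty_or_nonempty V with hV | hV
  · -- V empty : denominator is 0
    have hα0 : indepNum' G = 0 := by
      unfold indepNum'
      refine le_antisymm (Finset.sup_le ?_) (Nat.zero_le _)
      intro s _
      have hs : s = ∅ := Finset.eq_empty_of_isEmpty s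
      subst hs
      simp
    rw [hα0]
    rw [Nat.cast_zero, div_zero]
    have h0 : (0:ℝ) ≤ (phi G : ℝ) := Nat.cast_nonneg _
    linarith
  · -- phi is attained by some proper coloring c
    have hne : {m | ∃ c, IsProper G c ∧ phiC G c = m}.Nonempty := by
      refine ⟨phiC G (fun v => ((Fintype.equivFin V) v : ℕ)),
        fun v => ((Fintype.equivFin V) v : ℕ), ?_, rfl⟩
      intro u v huv h
      apply G.ne_of_adj huv
      exact (Fintype.equivFin V).injective (Fin.val_injective h)
    have hmem : phi G ∈ {m | ∃ c, IsProper G c ∧ phiC G c = m} := Nat.sInf_mem hne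
    obtain ⟨c, hproper, hct⟩ := hmem
    have hαpos : 0 < indepNum' G := by
      obtain ⟨v⟩ := hV
      have h1 : ({v} : Finset V).card ≤ indepNum' G := by
        apply card_le_indepNum'
        intro u hu w hw
        rw [Finset.mem_singleton] at hu hw
        subst hu; subst hw
        exact G.irrefl
      exact (by simpa using h1 : 1 ≤ indepNum' G)
    have hαposR : (0:ℝ) < (indepNum' G : ℝ) := by exact_mod_cast hαpos
    by_cases hΔ : G.maxDegree = 0
    · -- no edges: χ = 1 and indepNum' = card V
      have hnoadj : ∀ u v : V, ¬ G.Adj u v := by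
        intro u v had
        have h1 : 0 < G.degree u := (G.degree_pos_iff_exists_adj u).mpr ⟨v, had⟩
        have h2 := G.degree_le_maxDegree u
        omega
      have hcol1 : G.Colorable 1 :=
        ⟨SimpleGraph.Coloring.mk (fun _ => 0) (fun {u v} had => absurd had (hnoadj u v))⟩
      have hchi1 : chi G = 1 := by
        have hle := hcol1.chromaticNumber_le
        have hpos := SimpleGraph.chromaticNumber_pos hcol1
        have heq : G.chromaticNumber = 1 := by
          refine le_antisymm (by exact_mod_cast hle) ?_
          exact ENat.one_le_iff_ne_zero.2 hpos.ne'
        simp [chi, heq]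
      have hcardle : Fintype.card V ≤ indepNum' G := by
        have h1 : (Finset.univ : Finset V).card ≤ indepNum' G := by
          apply card_le_indepNum'
          intro u _ w _
          exact hnoadj u w
        simpa using h1
      rw [hΔ, hchi1]
      push_cast
      have h2 : (Fintype.card V : ℝ) / (indepNum' G : ℝ) ≤ 1 := by
        rw [div_le_one hαposR]
        exact_mod_cast hcardle
      have h3 : (0:ℝ) ≤ (phi G : ℝ) := Nat.cast_nonneg _
      have h4 : (2 * (0:ℝ) - 1) * ((1:ℝ) - 1) = 0 := by ring
      rw [h4, sub_zero]
      linarith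
    · -- main case
      have hΔ1 : 1 ≤ G.maxDegree := by omega
      set Δ := G.maxDegree with hΔdef
      set t := phi G with htdef
      -- fibers of the coloring
      set fib : ℕ → Finset V := fun j => Finset.univ.filter (fun v => c v = j) with hfib
      set K := Finset.univ.image c with hK
      set k := K.card with hkdef
      -- disjointness of fibers
      have hfibdisj : ∀ i j : ℕ, i ≠ j → Disjoint (fib i) (fib j) := by
        intro i j hij
        rw [Finset.disjoint_left]
        intro a ha ha'
        rw [hfib] at ha ha'
        simp only [Finset.mem_filter] at ha ha'
        exact hij (ha.2 ▸ ha'.2 ▸ rfl)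
      -- fibers are independent
      have hfibind : ∀ j : ℕ, ∀ u ∈ fib j, ∀ v ∈ fib j, ¬ G.Adj u v := by
        intro j u hu v hv had
        rw [hfib, Finset.mem_filter] at hu hv
        exact hproper had (hu.2.trans hv.2.symm)
      -- each fiber has size at most the independence number
      have hfibα : ∀ j : ℕ, (fib j).card ≤ indepNum' G := by
        intro j
        exact card_le_indepNum' G (fib j) (hfibind j)
      -- sum of fibers over K is card V
      have hsumfib : ∑ j ∈ K, (fib j).card = Fintype.card V := by
        rw [← Finset.card_univ]
        exact (Finset.card_eq_sum_card_fiberwise (fun x _ => Finset.mem_image_of_mem c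
          (Finset.mem_univ x))).symm
      -- k ≤ t + χ
      have hdiscuniv : disc G c Finset.univ ≤ t := by
        rw [← hct]
        exact Finset.le_sup (Finset.mem_univ _)
      have hchiIU : chi (G.induce ((Finset.univ : Finset V) : Set V)) ≤ chi G := by
        apply chi_le_of_colorable_s10
        apply colorable_induce_of_colorable
        exact G.colorable_chromaticNumber_of_fintype
      have hkbound : k ≤ t + chi G := by
        have h1 : k - chi (G.induce ((Finset.univ : Finset V) : Set V)) ≤ t := hdiscuniv
        omega
      -- big classes
      set BIG := K.filter (fun j => 2 * Δ ≤ (fib j).card) with hBIG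
      set r := BIG.card with hrdef
      -- r ≤ t + 1 via Haxell
      have hrbound : r ≤ t + 1 := by
        rcases Nat.eq_zero_or_pos r with h0 | hrpos
        · omega
        · obtain ⟨f, hfmem, hfind⟩ := haxell_IT G hΔ1 fib BIG
            (fun i _ j _ hij => hfibdisj i j hij)
            (fun i hi => (Finset.mem_filter.1 hi).2)
          set s₀ := BIG.image f with hs₀
          have hcfj : ∀ j ∈ BIG, c (f j) = j := by
            intro j hj
            have := hfmem j hj
            rw [hfib, Finset.mem_filter] at this
            exact this.2
          have himg : s₀.image c = BIG := by
            rw [hs₀, Finset.image_image]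
            apply Finset.ext
            intro j
            simp only [Finset.mem_image, Function.comp_apply]
            constructor
            · rintro ⟨i, hi, rfl⟩
              rwa [hcfj i hi]
            · intro hj
              exact ⟨j, hj, hcfj j hj⟩
          have hs₀ind : ∀ u ∈ s₀, ∀ v ∈ s₀, ¬ G.Adj u v := by
            intro u hu v hv had
            rw [hs₀, Finset.mem_image] at hu hv
            obtain ⟨i, hi, rfl⟩ := hu
            obtain ⟨j, hj, rfl⟩ := hv
            by_cases hij : i = j
            · subst hij
              exact G.irrefl had
            · exact hfind i hi j hj hij had
          have hchis₀ : chi (G.induce ((s₀ : Finset V) : Set V)) ≤ 1 := by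
            apply chi_le_of_colorable_s10
            refine ⟨SimpleGraph.Coloring.mk (fun _ => 0) ?_⟩
            intro a b hab
            exact absurd hab (hs₀ind a.1 a.2 b.1 b.2)
          have hdiscs₀ : disc G c s₀ ≤ t := by
            rw [← hct]
            exact Finset.le_sup (Finset.mem_univ _)
          have : r - 1 ≤ t := by
            have h2 : disc G c s₀ = r - chi (G.induce ((s₀ : Finset V) : Set V)) := by
              unfold disc
              rw [himg]
            omega
          omega
      -- the counting
      have hsmall : ∀ j ∈ K \ BIG, (fib j).card ≤ 2 * Δ - 1 := by
        intro j hj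
        rw [Finset.mem_sdiff] at hj
        have h1 : ¬ (2 * Δ ≤ (fib j).card) := by
          intro hcon
          exact hj.2 (Finset.mem_filter.2 ⟨hj.1, hcon⟩)
        omega
      have hsplit : ∑ j ∈ K, (fib j).card =
          ∑ j ∈ BIG, (fib j).card + ∑ j ∈ K \ BIG, (fib j).card := by
        rw [hBIG]
        rw [← Finset.sum_filter_add_sum_filter_not K (fun j => 2 * Δ ≤ (fib j).card)]
        congr 1
        apply Finset.sum_congr _ (fun _ _ => rfl)
        ext j
        simp [Finset.mem_sdiff, Finset.mem_filter]
        tauto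
      have hbigsum : ∑ j ∈ BIG, (fib j).card ≤ r * indepNum' G := by
        calc ∑ j ∈ BIG, (fib j).card ≤ ∑ _j ∈ BIG, indepNum' G :=
              Finset.sum_le_sum (fun j _ => hfibα j)
          _ = r * indepNum' G := by rw [Finset.sum_const, smul_eq_mul]
      have hsmallcard : (K \ BIG).card = k - r := by
        rw [Finset.card_sdiff_of_subset (Finset.filter_subset _ _)]
      have hsmallsum : ∑ j ∈ K \ BIG, (fib j).card ≤ (k - r) * (2 * Δ - 1) := by
        calc ∑ j ∈ K \ BIG, (fib j).card ≤ ∑ _j ∈ K \ BIG, (2 * Δ - 1) :=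
              Finset.sum_le_sum hsmall
          _ = (k - r) * (2 * Δ - 1) := by rw [Finset.sum_const, smul_eq_mul, hsmallcard]
      have hrk : r ≤ k := Finset.card_filter_le _ _
      -- to the reals
      have hχ1 : 1 ≤ chi G := by
        have hcol := G.colorable_of_fintype
        have hpos := SimpleGraph.chromaticNumber_pos hcol
        have hnetop : G.chromaticNumber ≠ ⊤ :=
          SimpleGraph.chromaticNumber_ne_top_iff_exists.2 ⟨_, hcol⟩
        have h1x : 1 ≤ G.chromaticNumber := ENat.one_le_iff_ne_zero.2 hpos.ne'
        have h2x := ENat.toNat_le_toNat h1x hnetop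
        simpa [chi] using h2x
      have hmain : (Fintype.card V : ℝ) ≤ ((t:ℝ) + 1) * (indepNum' G : ℝ)
          + (2 * (Δ:ℝ) - 1) * ((chi G : ℝ) - 1) := by
        have h2Δ : 1 ≤ 2 * Δ := by omega
        have hN : Fintype.card V ≤ r * indepNum' G + (k - r) * (2 * Δ - 1) := by
          have := hsumfib
          linarith [hsplit, hbigsum, hsmallsum, hsumfib.ge, hsumfib.le]
        have c1 : (Fintype.card V : ℝ) ≤ (r:ℝ) * (indepNum' G : ℝ)
            + ((k:ℝ) - (r:ℝ)) * (2 * (Δ:ℝ) - 1) := by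
          calc (Fintype.card V : ℝ)
              ≤ ((r * indepNum' G + (k - r) * (2 * Δ - 1) : ℕ) : ℝ) := by exact_mod_cast hN
            _ = (r:ℝ) * (indepNum' G : ℝ) + ((k:ℝ) - (r:ℝ)) * (2 * (Δ:ℝ) - 1) := by
                push_cast [Nat.cast_sub hrk, Nat.cast_sub h2Δ]
                ring
        have c2 : (r:ℝ) ≤ (t:ℝ) + 1 := by exact_mod_cast hrbound
        have c3 : (k:ℝ) ≤ (t:ℝ) + (chi G : ℝ) := by exact_mod_cast hkbound
        have c4 : 2 * (Δ:ℝ) ≤ (indepNum' G : ℝ) := by exact_mod_cast hα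
        have c5 : (1:ℝ) ≤ (Δ:ℝ) := by exact_mod_cast hΔ1
        have c6 : (1:ℝ) ≤ (chi G : ℝ) := by exact_mod_cast hχ1
        have h7 : (0:ℝ) ≤ ((t:ℝ) + 1 - (r:ℝ)) * ((indepNum' G : ℝ) - (2 * (Δ:ℝ) - 1)) := by
          apply mul_nonneg <;> linarith
        have h8 : (0:ℝ) ≤ ((t:ℝ) + (chi G : ℝ) - (k:ℝ)) * (2 * (Δ:ℝ) - 1) := by
          apply mul_nonneg <;> linarith
        nlinarith [c1, c2, c3, c4, c5, c6, h7, h8]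
      rw [sub_le_iff_le_add, div_le_iff₀ hαposR]
      linarith [hmain]
end

section
/- For any triangle-free graph G, φ̂(G) ≥ ψ(G) - 2, where ψ(G) is the local chromatic number of G. -/
open SimpleGraph

open Classical in
noncomputable def psi {W : Type*} [Fintype W] (G : SimpleGraph W) : ℕ :=
  sInf {n | ∃ c, IsProper G c ∧
    Finset.univ.sup
      (fun v : W => ((insert v (Finset.univ.filter (G.Adj v))).image c).card) = n}

theorem stmt12 {V : Type*} [Fintype V] (G : SimpleGraph V) (hG : G.CliqueFree 3) :
    psi G - 2 ≤ phiHat G := by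
  classical
  -- the set defining phiHat is nonempty
  have hne : {n | ∃ c, IsProper G c ∧ phiHatC G c = n}.Nonempty := by
    refine ⟨_, fun v => (Fintype.equivFin V v : ℕ), fun u v huv => ?_, rfl⟩
    exact fun h => huv.ne ((Fintype.equivFin V).injective (Fin.ext h))
  obtain ⟨c, hc, hceq⟩ := Nat.sInf_mem hne
  -- psi G ≤ sup over v of closed nbhd colors with this c
  have hpsi : psi G ≤ Finset.univ.sup
      (fun v : V => ((insert v (Finset.univ.filter (G.Adj v))).image c).card) :=
    Nat.sInf_le ⟨c, hc, rfl⟩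
  have key : ∀ v : V,
      ((insert v (Finset.univ.filter (G.Adj v))).image c).card ≤ phiHatC G c + 2 := by
    intro v
    set s : Finset V := insert v (Finset.univ.filter (G.Adj v)) with hs
    have hmem : ∀ u ∈ s, u = v ∨ G.Adj v u := by
      intro u hu
      rcases Finset.mem_insert.mp hu with h | h
      · exact Or.inl h
      · exact Or.inr (Finset.mem_filter.mp h).2
    have hv : v ∈ s := Finset.mem_insert_self _ _
    -- connectedness of the star
    have hconn : (G.induce (s : Set V)).Connected := by
      haveI : Nonempty (s : Set V) := ⟨⟨v, hv⟩⟩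
      refine ⟨fun x y => ?_⟩
      have hx : ∀ z : (s : Set V), (G.induce (s : Set V)).Reachable z ⟨v, hv⟩ := by
        intro z
        rcases hmem z.1 z.2 with h | h
        · have hz : z = ⟨v, hv⟩ := Subtype.ext h
          rw [hz]
        · exact (Adj.reachable (by exact h.symm : G.Adj z.1 v))
      exact (hx x).trans (hx y).symm
    -- 2-colorability of the star
    have hcol : (G.induce (s : Set V)).Colorable 2 := by
      refine ⟨⟨fun z => if z.1 = v then 0 else 1, ?_⟩⟩
      rintro ⟨a, ha⟩ ⟨b, hb⟩ hab
      have hab' : G.Adj a b := hab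
      by_cases h1 : a = v <;> by_cases h2 : b = v
      · rw [h1, h2] at hab'; exact (G.loopless.irrefl v hab').elim
      · simp [h1, h2]
      · simp [h1, h2]
      · rcases hmem a ha with h | h; · exact absurd h h1
        rcases hmem b hb with h' | h'; · exact absurd h' h2
        exact absurd (is3Clique_triple_iff.mpr ⟨h, h', hab'⟩) (hG _)
    have hchi : chi (G.induce (s : Set V)) ≤ 2 := by
      have := hcol.chromaticNumber_le
      have h2 : (G.induce (s : Set V)).chromaticNumber ≤ (2 : ℕ∞) := by
        exact_mod_cast this
      calc chi (G.induce (s : Set V)) ≤ ((2 : ℕ∞)).toNat := by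
            exact ENat.toNat_le_toNat h2 (by simp)
        _ = 2 := rfl
    have hdisc : (s.image c).card ≤ disc G c s + 2 := by
      unfold disc; omega
    have hle : disc G c s ≤ phiHatC G c := by
      unfold phiHatC
      have := Finset.le_sup (f := fun t : Finset V =>
        if (G.induce (t : Set V)).Connected then disc G c t else 0)
        (Finset.mem_univ s)
      simpa [hconn] using this
    omega
  have : Finset.univ.sup
      (fun v : V => ((insert v (Finset.univ.filter (G.Adj v))).image c).card)
      ≤ phiHatC G c + 2 := Finset.sup_le fun v _ => key v
  have hphiHat : phiHatC G c = phiHat G := hceq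
  omega
end

section
/- φ(G) = 0 if and only if G is a complete multipartite graph. -/
open SimpleGraph

def IsCompleteMultipartite' {W : Type*} (G : SimpleGraph W) : Prop :=
  ∃ (ι : Type) (f : W → ι), ∀ u v : W, G.Adj u v ↔ f u ≠ f v

theorem stmt13 {V : Type*} [Fintype V] (G : SimpleGraph V) :
    phi G = 0 ↔ IsCompleteMultipartite' G := by
  classical
  constructor
  · intro h
    have hne : {n | ∃ c, IsProper G c ∧ phiC G c = n}.Nonempty := by
      refine ⟨_, fun v => (Fintype.equivFin V v : ℕ), ?_, rfl⟩
      intro u v huv (hc : (Fintype.equivFin V u : ℕ) = Fintype.equivFin V v)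
      exact huv.ne ((Fintype.equivFin V).injective (Fin.val_injective hc))
    have h0 : 0 ∈ {n | ∃ c, IsProper G c ∧ phiC G c = n} :=
      ((Nat.sInf_eq_zero.mp h).resolve_right hne.ne_empty)
    obtain ⟨c, hc, hc0⟩ := h0
    have key : ∀ x y : V, x ≠ y → ¬ G.Adj x y → c x = c y := by
      intro x y hxy hadj
      by_contra hcxy
      have hdisc : disc G c {x, y} = 0 :=
        Nat.le_zero.mp (hc0 ▸ Finset.le_sup (Finset.mem_univ ({x, y} : Finset V)))
      have hcard : (({x, y} : Finset V).image c).card = 2 := by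
        rw [Finset.image_insert, Finset.image_singleton]
        exact Finset.card_pair hcxy
      have hcol : (G.induce (({x, y} : Finset V) : Set V)).Colorable 1 := by
        refine ⟨Coloring.mk (fun _ => 0) ?_⟩
        rintro ⟨a, ha⟩ ⟨b, hb⟩ hab _
        simp only [Finset.coe_insert, Finset.coe_singleton, Set.mem_insert_iff,
          Set.mem_singleton_iff] at ha hb
        have hab' : G.Adj a b := hab
        rcases ha with rfl | rfl <;> rcases hb with rfl | rfl
        · exact G.irrefl hab'
        · exact hadj hab'
        · exact hadj hab'.symm
        · exact G.irrefl hab'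
      have hchi : chi (G.induce (({x, y} : Finset V) : Set V)) ≤ 1 := by
        have := hcol.chromaticNumber_le
        unfold chi
        exact_mod_cast ENat.toNat_le_of_le_coe this
      unfold disc at hdisc
      omega
    refine ⟨ℕ, c, fun u v => ⟨fun hadj => hc hadj, fun hne' => ?_⟩⟩
    by_contra hadj
    rcases eq_or_ne u v with rfl | huv
    · exact hne' rfl
    · exact hne' (key u v huv hadj)
  · rintro ⟨ι, f, hf⟩
    have hr : Equivalence (fun u v : V => f u = f v) :=
      ⟨fun _ => rfl, Eq.symm, Eq.trans⟩
    let r : Setoid V := ⟨fun u v => f u = f v, hr⟩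
    let c : V → ℕ := fun v => (Fintype.equivFin (Quotient r) (Quotient.mk r v) : ℕ)
    have hcc : ∀ u v : V, c u = c v ↔ f u = f v := by
      intro u v
      constructor
      · intro h
        have := (Fintype.equivFin (Quotient r)).injective (Fin.val_injective h)
        exact Quotient.exact this
      · intro h
        simp only [c]
        exact congrArg (fun q => ((Fintype.equivFin (Quotient r)) q : ℕ))
          (Quotient.sound (s := r) h)
    have hproper : IsProper G c := by
      intro u v hadj hc'
      exact (hf u v).mp hadj ((hcc u v).mp hc')
    have hphiC : phiC G c = 0 := by
      refine Nat.le_zero.mp (Finset.sup_le fun s _ => ?_)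
      rw [Nat.le_zero]
      unfold disc
      rw [Nat.sub_eq_zero_iff_le]
      set t := s.image c with ht
      have hrep : ∀ k ∈ t, ∃ v, v ∈ s ∧ c v = k := by
        intro k hk
        simpa [ht, Finset.mem_image] using hk
      choose rep hrep1 hrep2 using hrep
      let g : {k // k ∈ t} → (↑(s : Set V) : Type _) :=
        fun k => ⟨rep k.1 k.2, by simpa using hrep1 k.1 k.2⟩
      have hginj : Function.Injective g := by
        rintro ⟨k, hk⟩ ⟨k', hk'⟩ hg
        have : rep k hk = rep k' hk' := congrArg Subtype.val hg
        have := congrArg c this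
        rw [hrep2 k hk, hrep2 k' hk'] at this
        exact Subtype.ext this
      let R : Finset (↑(s : Set V) : Type _) := Finset.univ.image g
      have hRcard : R.card = t.card := by
        rw [Finset.card_image_of_injective _ hginj, Finset.card_univ,
          Fintype.card_coe]
      have hclique : (G.induce (s : Set V)).IsClique (R : Set (↑(s : Set V))) := by
        intro a ha b hb hab
        simp only [R, Finset.coe_image, Finset.coe_univ, Set.image_univ,
          Set.mem_range] at ha hb
        obtain ⟨k, rfl⟩ := ha
        obtain ⟨k', rfl⟩ := hb
        have hkk' : (k : ℕ) ≠ k' := fun h => hab (congrArg g (Subtype.ext h))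
        have hcne : c ((g k) : V) ≠ c ((g k') : V) := by
          simp only [g, hrep2]
          exact hkk'
        have : G.Adj ((g k) : V) ((g k') : V) :=
          (hf _ _).mpr (fun h => hcne ((hcc _ _).mpr h))
        exact this
      have hle := hclique.card_le_chromaticNumber
      rw [hRcard] at hle
      have hfin : (G.induce (s : Set V)).chromaticNumber ≠ ⊤ := by
        have := (G.induce (s : Set V)).colorable_of_fintype.chromaticNumber_le
        exact fun h => by rw [h] at this; exact (ENat.coe_lt_top _).not_ge this
      unfold chi
      have := ENat.toNat_le_toNat hle hfin
      simpa using this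
    exact Nat.sInf_eq_zero.mpr (Or.inl ⟨c, hproper, hphiC⟩)
end

section
/- If G is an odd cycle of length at least 9, then φ(G) = 2. -/
open SimpleGraph

open Fin.NatCast Fin.CommRing

section Aux

variable {n : ℕ}

lemma chi_pos {W : Type*} [Fintype W] [Nonempty W] (G : SimpleGraph W) : 1 ≤ chi G := by
  have hcol := G.colorable_of_fintype
  have hpos : 0 < G.chromaticNumber := chromaticNumber_pos hcol
  have hne : G.chromaticNumber ≠ ⊤ := chromaticNumber_ne_top_iff_exists.2 ⟨_, hcol⟩
  unfold chi
  rw [Nat.one_le_iff_ne_zero]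
  intro h0
  rw [ENat.toNat_eq_zero] at h0
  rcases h0 with h0 | h0
  · exact absurd h0 hpos.ne'
  · exact hne h0

lemma chi_le_one_of_indep {W : Type*} (G : SimpleGraph W) (s : Set W)
    (h : ∀ u v : s, ¬ G.Adj u v) : chi (G.induce s) ≤ 1 := by
  have hcol : (G.induce s).Colorable 1 := by
    refine ⟨Coloring.mk (fun _ => (0 : Fin 1)) ?_⟩
    intro a b hab
    exact absurd hab (h a b)
  have := hcol.chromaticNumber_le
  unfold chi
  have h2 := ENat.toNat_le_toNat this (by simp)
  simpa using h2

lemma cg_nonadj [NeZero n] (hn : 9 ≤ n) (v : Fin n) {i j : ℕ} (hij : i < j) (hj : j ≤ 7)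
    (h2 : 2 ≤ j - i) :
    ¬ (cycleGraph n).Adj (v + (i : Fin n)) (v + (j : Fin n)) := by
  rw [cycleGraph_adj']
  have hji : ((j : Fin n) : Fin n) = (i : Fin n) + ((j - i : ℕ) : Fin n) := by
    rw [← Nat.cast_add]
    congr 1
    omega
  have e1 : (v + (i : Fin n)) - (v + (j : Fin n)) = ((n - (j - i) : ℕ) : Fin n) := by
    have hz : ((n - (j - i) : ℕ) : Fin n) + ((j - i : ℕ) : Fin n) = 0 := by
      rw [← Nat.cast_add]
      have : n - (j - i) + (j - i) = n := by omega
      rw [this, Fin.natCast_self]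
    rw [hji]
    have := eq_neg_of_add_eq_zero_left hz
    rw [this]
    ring
  have e2 : (v + (j : Fin n)) - (v + (i : Fin n)) = ((j - i : ℕ) : Fin n) := by
    rw [hji]; ring
  rw [e1, e2, Fin.val_natCast, Fin.val_natCast]
  have m1 : (n - (j - i)) % n = n - (j - i) := Nat.mod_eq_of_lt (by omega)
  have m2 : (j - i) % n = j - i := Nat.mod_eq_of_lt (by omega)
  rw [m1, m2]
  omega

lemma cg_adj_succ [NeZero n] (hn : 9 ≤ n) (v : Fin n) (i : ℕ) :
    (cycleGraph n).Adj (v + (i : Fin n)) (v + ((i + 1 : ℕ) : Fin n)) := by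
  rw [cycleGraph_adj']
  right
  have e : (v + ((i + 1 : ℕ) : Fin n)) - (v + (i : Fin n)) = ((1 : ℕ) : Fin n) := by
    push_cast
    ring
  rw [e, Fin.val_natCast, Nat.mod_eq_of_lt (by omega)]

lemma exists_skip [NeZero n] (hn : 9 ≤ n) (hodd : Odd n) {c : Fin n → ℕ}
    (hc : IsProper (cycleGraph n) c) :
    ∃ v : Fin n, c v ≠ c (v + ((2 : ℕ) : Fin n)) := by
  by_contra h
  push_neg at h
  have key : ∀ (k : ℕ) (v : Fin n), c (v + ((2 * k : ℕ) : Fin n)) = c v := by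
    intro k
    induction k with
    | zero => intro v; simp
    | succ k ih =>
      intro v
      have e : v + ((2 * (k + 1) : ℕ) : Fin n) = (v + ((2 : ℕ) : Fin n)) + ((2 * k : ℕ) : Fin n) := by
        push_cast
        ring
      rw [e, ih, ← h v]
  obtain ⟨m, hm⟩ := hodd
  have h2k : 2 * (m + 1) = n + 1 := by omega
  have e1 : ((2 * (m + 1) : ℕ) : Fin n) = ((1 : ℕ) : Fin n) := by
    rw [h2k]
    push_cast
    rw [Fin.natCast_self]
    ring
  have := key (m + 1) 0
  rw [e1] at this
  have hadj : (cycleGraph n).Adj (0 + ((0:ℕ) : Fin n)) (0 + ((0 + 1 : ℕ) : Fin n)) :=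
    cg_adj_succ hn 0 0
  simp only [Nat.cast_zero, add_zero, Nat.zero_add] at hadj
  exact hc hadj this.symm

lemma exists_rainbow_indep [NeZero n] (hn : 9 ≤ n) (hodd : Odd n) {c : Fin n → ℕ}
    (hc : IsProper (cycleGraph n) c) :
    ∃ x y z : Fin n, ¬ (cycleGraph n).Adj x y ∧ ¬ (cycleGraph n).Adj x z ∧
      ¬ (cycleGraph n).Adj y z ∧ c x ≠ c y ∧ c x ≠ c z ∧ c y ≠ c z := by
  obtain ⟨v, h02⟩ := exists_skip hn hodd hc
  set f : ℕ → Fin n := fun i => v + (i : Fin n) with hf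
  have hf0 : f 0 = v := by simp [hf]
  have hadj : ∀ i : ℕ, (cycleGraph n).Adj (f i) (f (i + 1)) := fun i => cg_adj_succ hn v i
  have hna : ∀ {i j : ℕ}, i < j → j ≤ 7 → 2 ≤ j - i → ¬ (cycleGraph n).Adj (f i) (f j) :=
    fun hij hj h2 => cg_nonadj hn v hij hj h2
  by_contra h
  push_neg at h
  -- h : ∀ x y z, ¬Adj x y → ¬Adj x z → ¬Adj y z → c x ≠ c y → c x ≠ c z → c y = c z
  have h02' : c (f 0) ≠ c (f 2) := by rw [hf0]; exact h02
  have h01 : c (f 0) ≠ c (f 1) := hc (hadj 0)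
  have h12 : c (f 1) ≠ c (f 2) := hc (hadj 1)
  have hmem : ∀ k : ℕ, 4 ≤ k → k ≤ 7 → c (f k) = c (f 0) ∨ c (f k) = c (f 2) := by
    intro k hk4 hk7
    by_contra hk
    push_neg at hk
    have na1 : ¬ (cycleGraph n).Adj (f k) (f 0) := fun ha => hna (by omega) (by omega) (by omega) ha.symm
    have na2 : ¬ (cycleGraph n).Adj (f k) (f 2) := fun ha => hna (by omega) (by omega) (by omega) ha.symm
    have na3 : ¬ (cycleGraph n).Adj (f 0) (f 2) := hna (by omega) (by omega) (by omega)
    exact h02' (h (f k) (f 0) (f 2) na1 na2 na3 hk.1 hk.2)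
  have h4 := hmem 4 (by omega) (by omega)
  have h5 := hmem 5 (by omega) (by omega)
  have h6 := hmem 6 (by omega) (by omega)
  have h7 := hmem 7 (by omega) (by omega)
  have n45 : c (f 4) ≠ c (f 5) := hc (hadj 4)
  have n56 : c (f 5) ≠ c (f 6) := hc (hadj 5)
  have n67 : c (f 6) ≠ c (f 7) := hc (hadj 6)
  have n47 : c (f 4) ≠ c (f 7) := by omega
  have n14 : c (f 1) ≠ c (f 4) := by omega
  have n17 : c (f 1) ≠ c (f 7) := by omega
  have na14 : ¬ (cycleGraph n).Adj (f 1) (f 4) := hna (by omega) (by omega) (by omega)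
  have na17 : ¬ (cycleGraph n).Adj (f 1) (f 7) := hna (by omega) (by omega) (by omega)
  have na47 : ¬ (cycleGraph n).Adj (f 4) (f 7) := hna (by omega) (by omega) (by omega)
  exact n47 (h (f 1) (f 4) (f 7) na14 na17 na47 n14 n17)

end Aux

theorem stmt16 (n : ℕ) (hn : 9 ≤ n) (hodd : Odd n) :
    phi (SimpleGraph.cycleGraph n) = 2 := by
  haveI : NeZero n := ⟨by omega⟩
  -- the standard proper 3-coloring
  set c0 : Fin n → ℕ := fun i => if i.val = n - 1 then 2 else i.val % 2 with hc0
  have hproper : IsProper (cycleGraph n) c0 := by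
    have key : ∀ u v : Fin n, (v - u).val = 1 → c0 u ≠ c0 v := by
      intro u v huv
      have hvval : v.val = (u.val + 1) % n := by
        have hv : v = u + (v - u) := by ring
        rw [Fin.ext_iff, Fin.add_def, huv] at hv
        exact hv
      have hu : u.val < n := u.isLt
      simp only [hc0]
      rcases Nat.lt_or_ge u.val (n - 1) with hlt | hge
      · have hb : v.val = u.val + 1 := by
          rw [hvval, Nat.mod_eq_of_lt (by omega)]
        split_ifs <;> omega
      · have ha : u.val = n - 1 := by omega
        have hb : v.val = 0 := by
          rw [hvval]
          have : u.val + 1 = n := by omega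
          rw [this, Nat.mod_self]
        split_ifs <;> omega
    intro u v hadj
    rw [cycleGraph_adj'] at hadj
    rcases hadj with h1 | h1
    · exact (key v u h1).symm
    · exact key u v h1
  have hchi_le : ∀ s : Finset (Fin n), s.Nonempty →
      1 ≤ chi ((cycleGraph n).induce (s : Set (Fin n))) := by
    intro s hs
    obtain ⟨x, hx⟩ := hs
    haveI : Nonempty (s : Set (Fin n)) := ⟨⟨x, by simpa using hx⟩⟩
    exact chi_pos _
  have hupper : phiC (cycleGraph n) c0 ≤ 2 := by
    apply Finset.sup_le
    intro s _
    rcases s.eq_empty_or_nonempty with rfl | hs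
    · simp [disc]
    · have h1 := hchi_le s hs
      have h2 : (s.image c0).card ≤ 3 := by
        have hsub : s.image c0 ⊆ {0, 1, 2} := by
          intro a ha
          simp only [Finset.mem_image] at ha
          obtain ⟨i, _, rfl⟩ := ha
          simp only [hc0]
          split
          · simp
          · have : i.val % 2 < 2 := Nat.mod_lt _ (by omega)
            simp only [Finset.mem_insert, Finset.mem_singleton]
            omega
        calc (s.image c0).card ≤ ({0,1,2} : Finset ℕ).card := Finset.card_le_card hsub
          _ = 3 := by decide
      unfold disc
      omega
  have hmem : phiC (cycleGraph n) c0 ∈ {m | ∃ c, IsProper (cycleGraph n) c ∧ phiC (cycleGraph n) c = m} :=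
    ⟨c0, hproper, rfl⟩
  have hlow : ∀ m ∈ {m | ∃ c, IsProper (cycleGraph n) c ∧ phiC (cycleGraph n) c = m}, 2 ≤ m := by
    rintro m ⟨c, hc, rfl⟩
    obtain ⟨x, y, z, naxy, naxz, nayz, nxy, nxz, nyz⟩ := exists_rainbow_indep hn hodd hc
    have hxy : x ≠ y := fun h => nxy (by rw [h])
    have hxz : x ≠ z := fun h => nxz (by rw [h])
    have hyz : y ≠ z := fun h => nyz (by rw [h])
    set s : Finset (Fin n) := {x, y, z} with hs
    have hcard : (s.image c).card = 3 := by
      rw [hs, Finset.image_insert, Finset.image_insert, Finset.image_singleton]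
      rw [Finset.card_insert_of_notMem (by simp [nxy, nxz]),
        Finset.card_insert_of_notMem (by simp [nyz]), Finset.card_singleton]
    have hindep : ∀ u v : (s : Set (Fin n)), ¬ (cycleGraph n).Adj u v := by
      rintro ⟨u, hu⟩ ⟨v, hv⟩
      simp only [hs, Finset.coe_insert, Set.mem_insert_iff, Finset.coe_singleton,
        Set.mem_singleton_iff] at hu hv
      rcases hu with rfl | rfl | rfl <;> rcases hv with rfl | rfl | rfl <;>
        simp only [] <;>
        first
          | exact (cycleGraph n).irrefl
          | exact naxy
          | exact naxz
          | exact nayz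
          | exact fun h => naxy h.symm
          | exact fun h => naxz h.symm
          | exact fun h => nayz h.symm
    have hchi := chi_le_one_of_indep (cycleGraph n) (s : Set (Fin n)) hindep
    have hd : 2 ≤ disc (cycleGraph n) c s := by
      unfold disc
      omega
    exact le_trans hd (Finset.le_sup (Finset.mem_univ s))
  have h1 : phi (cycleGraph n) ≤ 2 := le_trans (Nat.sInf_le hmem) hupper
  have h2 : 2 ≤ phi (cycleGraph n) := le_csInf ⟨_, hmem⟩ hlow
  omega
end

section
/- For every pair of integers c ≥ 1 and 0 ≤ p ≤ c - 1, the graph G = K_c ∪ p·K_p (disjoint union of K_c with p copies of K_p) is perfect, has χ(G) = c, and satisfies φ(G) = p. -/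
open SimpleGraph

def sameBlock (c p : ℕ) : (Fin c ⊕ Fin p × Fin p) → Option (Fin p)
  | Sum.inl _ => none
  | Sum.inr a => some a.1

/-- The disjoint union `K_c ∪ p·K_p`: a clique on `Fin c` together with `p`
disjoint copies of `K_p` (vertices of copy `i` are `Sum.inr (i, ·)`). -/
def Gcp (c p : ℕ) : SimpleGraph (Fin c ⊕ Fin p × Fin p) :=
  SimpleGraph.fromRel (fun u v => sameBlock c p u = sameBlock c p v)

def IsPerfect {W : Type*} [Fintype W] (G : SimpleGraph W) : Prop :=
  ∀ s : Finset W, chi (G.induce (s : Set W)) = cliqueNum' (G.induce (s : Set W))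

open Finset

section General
variable {V B : Type*} [Fintype V] (f : V → B)

open Classical in
noncomputable def fib (x : V) : Finset V := Finset.univ.filter (fun y => f y = f x)

noncomputable def Nf : ℕ := Finset.univ.sup (fun x => (fib f x).card)

lemma mem_fib_self (x : V) : x ∈ fib f x := by
  classical simp [fib]

lemma fib_card_le (x : V) : (fib f x).card ≤ Nf f :=
  Finset.le_sup (f := fun x => (fib f x).card) (Finset.mem_univ x)

open Classical in
noncomputable def col (x : V) : ℕ :=
  ((fib f x).filter (fun y => (Fintype.equivFin V y : ℕ) < Fintype.equivFin V x)).card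

lemma col_lt (x : V) : col f x < Nf f := by
  classical
  refine lt_of_lt_of_le ?_ (fib_card_le f x)
  apply Finset.card_lt_card
  constructor
  · exact Finset.filter_subset _ _
  · intro hsub
    have := hsub (mem_fib_self f x)
    simp [col] at this

lemma col_ne {u v : V} (hne : u ≠ v) (hf : f u = f v) : col f u ≠ col f v := by
  classical
  have hfib : fib f u = fib f v := by simp [fib, hf]
  have henc : (Fintype.equivFin V u : ℕ) ≠ Fintype.equivFin V v := by
    simp [Fin.val_eq_val, hne]
  wlog h : (Fintype.equivFin V u : ℕ) < Fintype.equivFin V v generalizing u v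
  · exact (this hne.symm hf.symm hfib.symm henc.symm (by omega)).symm
  have : col f u < col f v := by
    apply Finset.card_lt_card
    rw [hfib]
    constructor
    · intro y hy
      simp only [Finset.mem_filter] at hy ⊢
      exact ⟨hy.1, lt_trans hy.2 h⟩
    · intro hsub
      have hu : u ∈ (fib f v).filter (fun y => (Fintype.equivFin V y : ℕ) < Fintype.equivFin V v) := by
        refine Finset.mem_filter.2 ⟨?_, h⟩
        rw [← hfib]; exact mem_fib_self f u
      have := hsub hu
      simp at this
  omega

variable {G : SimpleGraph V} (hG : ∀ u v, G.Adj u v ↔ u ≠ v ∧ f u = f v)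

include hG

lemma colorable_Nf : G.Colorable (Nf f) := by
  refine ⟨SimpleGraph.Coloring.mk (fun x => ⟨col f x, col_lt f x⟩) ?_⟩
  intro u v huv
  obtain ⟨hne, hf⟩ := (hG u v).1 huv
  simpa [Fin.ext_iff] using col_ne f hne hf

lemma fib_isClique (x : V) : G.IsClique (fib f x : Set V) := by
  classical
  intro a ha b hb hab
  simp only [fib, Finset.coe_filter, Set.mem_setOf_eq] at ha hb
  exact (hG a b).2 ⟨hab, ha.2.trans hb.2.symm⟩

lemma chromaticNumber_eq : G.chromaticNumber = (Nf f : ℕ∞) := by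
  classical
  refine le_antisymm ((colorable_Nf f hG).chromaticNumber_le) ?_
  cases isEmpty_or_nonempty V with
  | inl h =>
    have : Nf f = 0 := by simp [Nf]
    simp [this]
  | inr h =>
    obtain ⟨x, -, hx⟩ := Finset.exists_mem_eq_sup (Finset.univ : Finset V)
      Finset.univ_nonempty (fun x => (fib f x).card)
    have := (fib_isClique f hG x).card_le_chromaticNumber
    rw [Nf, hx]
    exact_mod_cast this

lemma chi_eq : chi G = Nf f := by
  rw [chi, chromaticNumber_eq f hG]; simp

open Classical in
lemma cliqueNum'_eq [DecidableEq V] : (Finset.univ.sup fun s : Finset V =>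
    if G.IsClique (s : Set V) then s.card else 0) = Nf f := by
  classical
  apply le_antisymm
  · apply Finset.sup_le
    intro s _
    split_ifs with hs
    · rcases s.eq_empty_or_nonempty with rfl | ⟨x, hx⟩
      · simp
      · have hsub : s ⊆ fib f x := by
          intro y hy
          rcases eq_or_ne y x with rfl | hne
          · exact mem_fib_self f y
          · have := hs (by exact_mod_cast hy) (by exact_mod_cast hx) hne
            simp [fib, ((hG y x).1 this).2]
        exact le_trans (Finset.card_le_card hsub) (fib_card_le f x)
    · exact Nat.zero_le _
  · apply Finset.sup_le
    intro x _
    have := Finset.le_sup (f := fun s : Finset V =>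
      if G.IsClique (s : Set V) then s.card else 0) (Finset.mem_univ (fib f x))
    simpa only [fib_isClique f hG x, if_true] using this

end General

-- bridge: cliqueNum' vs the sup expression
lemma cliqueNum'_eq_Nf {V B : Type*} [Fintype V] (f : V → B) {G : SimpleGraph V}
    (hG : ∀ u v, G.Adj u v ↔ u ≠ v ∧ f u = f v) : cliqueNum' G = Nf f := by
  classical
  rw [cliqueNum']
  convert cliqueNum'_eq f hG using 2

section App
variable {c p : ℕ}

abbrev Vt (c p : ℕ) := Fin c ⊕ Fin p × Fin p

lemma Gcp_adj (u v : Vt c p) :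
    (Gcp c p).Adj u v ↔ u ≠ v ∧ sameBlock c p u = sameBlock c p v := by
  rw [Gcp, SimpleGraph.fromRel_adj]
  exact ⟨fun ⟨h1, h2⟩ => ⟨h1, h2.elim id Eq.symm⟩, fun ⟨h1, h2⟩ => ⟨h1, Or.inl h2⟩⟩

lemma induce_hG (s : Set (Vt c p)) (a b : ↥s) :
    ((Gcp c p).induce s).Adj a b ↔ a ≠ b ∧ sameBlock c p ↑a = sameBlock c p ↑b := by
  rw [SimpleGraph.comap_adj, Gcp_adj]
  simp [Subtype.ext_iff, Function.Embedding.coe_subtype]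

lemma card_subtype_filter (s : Finset (Vt c p)) (P : Vt c p → Prop) [DecidablePred P]
    [Fintype ↥(↑s : Set (Vt c p))] :
    (Finset.univ.filter (fun y : ↥(↑s : Set (Vt c p)) => P ↑y)).card = (s.filter P).card := by
  classical
  refine Finset.card_bij (fun y _ => (y : Vt c p)) ?_ ?_ ?_
  · intro y hy
    simp only [Finset.mem_filter, Finset.mem_univ, true_and] at hy
    exact Finset.mem_filter.2 ⟨by exact_mod_cast y.2, hy⟩
  · intro a _ b _ h
    exact Subtype.ext h
  · intro b hb
    rw [Finset.mem_filter] at hb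
    exact ⟨⟨b, by exact_mod_cast hb.1⟩, by simp [hb.2], rfl⟩

lemma Nf_one_of_injOn (s : Finset (Vt c p)) [Fintype ↥(↑s : Set (Vt c p))]
    (hne : s.Nonempty) (hinj : Set.InjOn (sameBlock c p) ↑s) :
    Nf (fun y : ↥(↑s : Set (Vt c p)) => sameBlock c p ↑y) = 1 := by
  classical
  set f : ↥(↑s : Set (Vt c p)) → Option (Fin p) := fun y => sameBlock c p ↑y with hf
  have hne' : Nonempty ↥(↑s : Set (Vt c p)) := ⟨⟨hne.choose, by exact_mod_cast hne.choose_spec⟩⟩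
  apply le_antisymm
  · apply Finset.sup_le
    intro x _
    apply Finset.card_le_one.2
    intro a ha b hb
    simp only [fib, Finset.mem_filter] at ha hb
    exact Subtype.ext (hinj a.2 b.2 (ha.2.trans hb.2.symm))
  · obtain ⟨x⟩ := hne'
    calc 1 ≤ (fib f x).card := Finset.card_pos.2 ⟨x, mem_fib_self f x⟩
    _ ≤ Nf f := fib_card_le f x

lemma fib_inl (hc : 1 ≤ c) (i : Fin c) [DecidableEq (Vt c p)] :
    (fib (sameBlock c p) (Sum.inl i)) =
      (Finset.univ : Finset (Fin c)).map ⟨Sum.inl, Sum.inl_injective⟩ := by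
  classical
  ext y
  cases y with
  | inl a => simp only [fib, Finset.mem_filter, Finset.mem_univ, true_and]; simp [sameBlock]
  | inr a => simp only [fib, Finset.mem_filter, Finset.mem_univ, true_and]; simp [sameBlock]

lemma fib_inr (a : Fin p × Fin p) :
    (fib (sameBlock c p) (Sum.inr a)) =
      (Finset.univ : Finset (Fin p)).map
        ⟨fun j => Sum.inr (a.1, j), fun x y h => by simpa [Prod.ext_iff] using h⟩ := by
  classical
  ext y
  cases y with
  | inl b => simp only [fib, Finset.mem_filter, Finset.mem_univ, true_and]; simp [sameBlock]
  | inr b =>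
    simp only [fib, Finset.mem_filter, Finset.mem_univ, true_and, Finset.mem_map,
      Function.Embedding.coeFn_mk]
    simp only [sameBlock]
    constructor
    · rintro h
      exact ⟨b.2, by simp at h; simp [Prod.ext_iff, h.symm]⟩
    · rintro ⟨j, hj⟩
      injection hj with hj'
      simp [← hj']

lemma Nf_Gcp (hc : 1 ≤ c) (hp : p ≤ c - 1) : Nf (sameBlock c p) = c := by
  classical
  apply le_antisymm
  · apply Finset.sup_le
    intro x _
    cases x with
    | inl i => rw [fib_inl hc]; simp
    | inr a => rw [fib_inr]; simp; omega
  · calc (c : ℕ) = (fib (sameBlock c p) (Sum.inl ⟨0, hc⟩)).card := by rw [fib_inl hc]; simp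
    _ ≤ Nf (sameBlock c p) := fib_card_le _ _

end App

section Main
variable {c p : ℕ}

lemma chi_induce (s : Finset (Vt c p)) :
    chi ((Gcp c p).induce (↑s : Set (Vt c p))) =
      Nf (fun y : ↥(↑s : Set (Vt c p)) => sameBlock c p ↑y) :=
  chi_eq _ (induce_hG _)

lemma cliqueNum'_induce (s : Finset (Vt c p)) :
    cliqueNum' ((Gcp c p).induce (↑s : Set (Vt c p))) =
      Nf (fun y : ↥(↑s : Set (Vt c p)) => sameBlock c p ↑y) :=
  cliqueNum'_eq_Nf _ (induce_hG _)

lemma inr_col_inj {χ : Vt c p → ℕ} (hχ : IsProper (Gcp c p) χ) (i : Fin p) :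
    Function.Injective (fun j : Fin p => χ (Sum.inr (i, j))) := by
  intro j j' h
  by_contra hne
  have hadj : (Gcp c p).Adj (Sum.inr (i, j)) (Sum.inr (i, j')) :=
    (Gcp_adj _ _).2 ⟨by simp [Prod.ext_iff, hne], rfl⟩
  exact hχ hadj h

lemma inl_col_inj {χ : Vt c p → ℕ} (hχ : IsProper (Gcp c p) χ) :
    Function.Injective (fun i : Fin c => χ (Sum.inl i)) := by
  intro i i' h
  by_contra hne
  have hadj : (Gcp c p).Adj (Sum.inl i) (Sum.inl i') :=
    (Gcp_adj _ _).2 ⟨by simp [hne], rfl⟩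
  exact hχ hadj h

lemma greedy {χ : Vt c p → ℕ} (hχ : IsProper (Gcp c p) χ) :
    ∀ k, k ≤ p → ∃ t : Finset (Fin p × Fin p), t.card = k ∧
      (t.image Prod.fst).card = k ∧ (t.image (fun a => χ (Sum.inr a))).card = k := by
  classical
  intro k
  induction k with
  | zero => exact fun _ => ⟨∅, by simp⟩
  | succ k ih =>
    intro hk
    obtain ⟨t, ht1, ht2, ht3⟩ := ih (by omega)
    -- fresh block
    have h1 : ¬ ((Finset.univ : Finset (Fin p)) ⊆ t.image Prod.fst) := by
      intro h
      have := Finset.card_le_card h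
      simp [ht2] at this
      omega
    obtain ⟨i, -, hi⟩ := Finset.not_subset.1 h1
    -- fresh color within block i
    have hBi : ((Finset.univ : Finset (Fin p)).image (fun j => χ (Sum.inr (i, j)))).card = p := by
      rw [Finset.card_image_of_injective _ (inr_col_inj hχ i)]; simp
    have h2 : ¬ (((Finset.univ : Finset (Fin p)).image (fun j => χ (Sum.inr (i, j)))) ⊆
        t.image (fun a => χ (Sum.inr a))) := by
      intro h
      have := Finset.card_le_card h
      rw [hBi, ht3] at this
      omega
    obtain ⟨b, hb1, hb2⟩ := Finset.not_subset.1 h2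
    obtain ⟨j, -, rfl⟩ := Finset.mem_image.1 hb1
    have hnotmem : (i, j) ∉ t := fun hmem =>
      hi (Finset.mem_image.2 ⟨(i, j), hmem, rfl⟩)
    refine ⟨insert (i, j) t, ?_, ?_, ?_⟩
    · rw [Finset.card_insert_of_notMem hnotmem, ht1]
    · rw [Finset.image_insert, Finset.card_insert_of_notMem (by simpa using hi), ht2]
    · rw [Finset.image_insert, Finset.card_insert_of_notMem hb2, ht3]

lemma lower_bound {χ : Vt c p → ℕ} (hχ : IsProper (Gcp c p) χ) (hcp : p + 1 ≤ c) :
    p ≤ phiC (Gcp c p) χ := by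
  classical
  obtain ⟨t, ht1, ht2, ht3⟩ := greedy hχ p le_rfl
  -- fresh color in the K_c block
  have hBc : ((Finset.univ : Finset (Fin c)).image (fun i => χ (Sum.inl i))).card = c := by
    rw [Finset.card_image_of_injective _ (inl_col_inj hχ)]; simp
  have h2 : ¬ (((Finset.univ : Finset (Fin c)).image (fun i => χ (Sum.inl i))) ⊆
      t.image (fun a => χ (Sum.inr a))) := by
    intro h
    have := Finset.card_le_card h
    rw [hBc, ht3] at this
    omega
  obtain ⟨b, hb1, hb2⟩ := Finset.not_subset.1 h2
  obtain ⟨a, -, rfl⟩ := Finset.mem_image.1 hb1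
  set s : Finset (Vt c p) :=
    insert (Sum.inl a) (t.image Sum.inr) with hs
  have hinl_notmem : (Sum.inl a : Vt c p) ∉ t.image Sum.inr := by simp
  have hcard : s.card = p + 1 := by
    rw [hs, Finset.card_insert_of_notMem hinl_notmem,
      Finset.card_image_of_injective _ Sum.inr_injective, ht1]
  -- sameBlock injective on s
  have hblock : Set.InjOn (sameBlock c p) (↑s : Set (Vt c p)) := by
    intro x hx y hy hxy
    simp only [hs, Finset.coe_insert, Set.mem_insert_iff, Finset.coe_image, Set.mem_image,
      Finset.mem_coe] at hx hy
    have hfst : Set.InjOn Prod.fst (↑t : Set (Fin p × Fin p)) :=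
      Finset.card_image_iff.1 (by rw [ht2, ht1])
    rcases hx with rfl | ⟨u, hu, rfl⟩ <;> rcases hy with rfl | ⟨v, hv, rfl⟩
    · rfl
    · simp [sameBlock] at hxy
    · simp [sameBlock] at hxy
    · simp only [sameBlock, Option.some_inj] at hxy
      exact congrArg Sum.inr (hfst hu hv hxy)
  -- χ injective on s
  have hcol : Set.InjOn χ (↑s : Set (Vt c p)) := by
    intro x hx y hy hxy
    simp only [hs, Finset.coe_insert, Set.mem_insert_iff, Finset.coe_image, Set.mem_image,
      Finset.mem_coe] at hx hy
    have hct : Set.InjOn (fun a => χ (Sum.inr a)) (↑t : Set (Fin p × Fin p)) :=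
      Finset.card_image_iff.1 (by rw [ht3, ht1])
    rcases hx with rfl | ⟨u, hu, rfl⟩ <;> rcases hy with rfl | ⟨v, hv, rfl⟩
    · rfl
    · exact absurd (Finset.mem_image.2 ⟨v, hv, hxy.symm⟩) hb2
    · exact absurd (Finset.mem_image.2 ⟨u, hu, hxy⟩) hb2
    · exact congrArg Sum.inr (hct hu hv hxy)
  have himg : (s.image χ).card = p + 1 := by
    rw [Finset.card_image_of_injOn hcol, hcard]
  have hchi : chi ((Gcp c p).induce (↑s : Set (Vt c p))) = 1 := by
    rw [chi_induce]
    exact Nf_one_of_injOn s ⟨Sum.inl a, by simp [hs]⟩ hblock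
  have hdisc : disc (Gcp c p) χ s = p := by
    rw [disc, himg, hchi]
    omega
  calc p = disc (Gcp c p) χ s := hdisc.symm
  _ ≤ phiC (Gcp c p) χ := Finset.le_sup (Finset.mem_univ s)

def c0 : Vt c p → ℕ := Sum.elim (fun i => i.val) (fun a => a.2.val)

lemma c0_proper : IsProper (Gcp c p) (c0 (c := c) (p := p)) := by
  intro u v huv
  obtain ⟨hne, hsb⟩ := (Gcp_adj u v).1 huv
  match u, v with
  | Sum.inl i, Sum.inl i' =>
    simp only [c0, Sum.elim_inl]
    exact fun h => hne (by simp [Fin.val_eq_val] at h; simp [h])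
  | Sum.inl i, Sum.inr a => simp [sameBlock] at hsb
  | Sum.inr a, Sum.inl i => simp [sameBlock] at hsb
  | Sum.inr a, Sum.inr b =>
    simp only [sameBlock, Option.some_inj] at hsb
    simp only [c0, Sum.elim_inr]
    intro h
    exact hne (by simp [Prod.ext_iff, Fin.val_eq_val] at h ⊢; exact ⟨hsb, by omega⟩)

lemma upper_bound : phiC (Gcp c p) (c0 (c := c) (p := p)) ≤ p := by
  classical
  apply Finset.sup_le
  intro s _
  rw [disc, tsub_le_iff_right]
  set A := s.filter (fun x => x.isLeft) with hA
  have hsub : s.image c0 ⊆ (A.image c0) ∪ Finset.range p := by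
    intro b hb
    obtain ⟨x, hx, rfl⟩ := Finset.mem_image.1 hb
    cases x with
    | inl i => exact Finset.mem_union_left _ (Finset.mem_image.2 ⟨Sum.inl i,
        Finset.mem_filter.2 ⟨hx, rfl⟩, rfl⟩)
    | inr a => exact Finset.mem_union_right _ (Finset.mem_range.2 a.2.2)
  have h1 : (s.image c0).card ≤ A.card + p := by
    calc (s.image c0).card ≤ ((A.image c0) ∪ Finset.range p).card := Finset.card_le_card hsub
    _ ≤ (A.image c0).card + p := by
        simpa using Finset.card_union_le (A.image c0) (Finset.range p)
    _ ≤ A.card + p := by gcongr; exact Finset.card_image_le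
  have h2 : A.card ≤ chi ((Gcp c p).induce (↑s : Set (Vt c p))) := by
    rcases A.eq_empty_or_nonempty with hAe | ⟨x, hx⟩
    · simp [hAe]
    · rw [chi_induce]
      have hxs : x ∈ s := (Finset.mem_filter.1 hx).1
      have hxl : x.isLeft := (Finset.mem_filter.1 hx).2
      have hfibc : (fib (fun y : ↥(↑s : Set (Vt c p)) => sameBlock c p ↑y)
          ⟨x, by exact_mod_cast hxs⟩).card
          = (s.filter (fun z => sameBlock c p z = sameBlock c p x)).card := by
        rw [fib]
        convert card_subtype_filter s (fun z => sameBlock c p z = sameBlock c p x) using 2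
        ext y
        simp only [Finset.mem_filter]
      have hAsub : A ⊆ s.filter (fun z => sameBlock c p z = sameBlock c p x) := by
        intro y hy
        have hys : y ∈ s := (Finset.mem_filter.1 hy).1
        have hyl : y.isLeft := (Finset.mem_filter.1 hy).2
        refine Finset.mem_filter.2 ⟨hys, ?_⟩
        cases y with
        | inl _ => cases x with
          | inl _ => rfl
          | inr _ => simp at hxl
        | inr _ => simp at hyl
      calc A.card ≤ (s.filter (fun z => sameBlock c p z = sameBlock c p x)).card :=
            Finset.card_le_card hAsub
      _ = _ := hfibc.symm
      _ ≤ Nf _ := fib_card_le _ _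
  omega

theorem stmt17' (hc : 1 ≤ c) (hp : p ≤ c - 1) :
    IsPerfect (Gcp c p) ∧ chi (Gcp c p) = c ∧ phi (Gcp c p) = p := by
  have hcp : p + 1 ≤ c := by omega
  refine ⟨?_, ?_, ?_⟩
  · intro s
    rw [chi_induce, cliqueNum'_induce]
  · rw [chi_eq (sameBlock c p) Gcp_adj, Nf_Gcp hc hp]
  · have hmem : phiC (Gcp c p) (c0 (c := c) (p := p)) ∈
        {n | ∃ χ, IsProper (Gcp c p) χ ∧ phiC (Gcp c p) χ = n} := ⟨c0, c0_proper, rfl⟩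
    apply le_antisymm
    · exact le_trans (Nat.sInf_le hmem) upper_bound
    · apply le_csInf ⟨_, hmem⟩
      rintro n ⟨χ, hχ, rfl⟩
      exact lower_bound hχ hcp

end Main

theorem stmt17 (c p : ℕ) (hc : 1 ≤ c) (hp : p ≤ c - 1) :
    IsPerfect (Gcp c p) ∧ chi (Gcp c p) = c ∧ phi (Gcp c p) = p := stmt17' hc hp
end

section
/- For any connected graph G, φ(G) ≤ φ̂(G) + α(G) - 1, where α(G) is the independence number. -/
open SimpleGraph

set_option linter.unusedSectionVars false
set_option linter.unusedVariables false
set_option maxHeartbeats 1600000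

section Aux

variable {V : Type*} (G : SimpleGraph V)

lemma walkTake {u v : V} (w : G.Walk u v) (i : ℕ) :
    ∃ w' : G.Walk u (w.getVert i), w'.length ≤ i := by
  induction w generalizing i with
  | nil => exact ⟨(Walk.nil.copy rfl (by simp [Walk.getVert])), by simp⟩
  | @cons a b c h p ih =>
    cases i with
    | zero => exact ⟨Walk.nil.copy rfl (by simp), by simp⟩
    | succ i =>
      obtain ⟨w', hw'⟩ := ih i
      exact ⟨(Walk.cons h w').copy rfl (by simp [Walk.getVert_cons_succ]), by simpa using hw'⟩

lemma walkDrop {u v : V} (w : G.Walk u v) (i : ℕ) :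
    ∃ w' : G.Walk (w.getVert i) v, w'.length ≤ w.length - i := by
  induction w generalizing i with
  | nil => exact ⟨Walk.nil.copy (by simp [Walk.getVert]) rfl, by simp⟩
  | @cons a b c h p ih =>
    cases i with
    | zero => exact ⟨(Walk.cons h p).copy (by simp) rfl, by simp⟩
    | succ i =>
      obtain ⟨w', hw'⟩ := ih i
      exact ⟨w'.copy (by simp [Walk.getVert_cons_succ]) rfl, by simpa using hw'⟩

lemma reach_of_walk {t : Set V} {a b : V} (w : G.Walk a b) (ha : a ∈ t) (hb : b ∈ t)
    (hsup : ∀ x ∈ w.support, x ∈ t) :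
    (G.induce t).Reachable ⟨a, ha⟩ ⟨b, hb⟩ := by
  induction w with
  | nil => exact Reachable.refl _
  | @cons a c b h p ih =>
    have hc : c ∈ t := hsup c (by simp)
    have h1 : (G.induce t).Adj ⟨a, ha⟩ ⟨c, hc⟩ := h
    exact h1.reachable.trans (ih hc hb (fun x hx => hsup x (by simp [hx])))

lemma path_getVert_inj {u v : V} {p : G.Walk u v} (hp : p.IsPath) :
    ∀ {i j : ℕ}, i ≤ p.length → j ≤ p.length → p.getVert i = p.getVert j → i = j := by
  induction p with
  | nil => intro i j hi hj _; simp [Walk.length_nil] at hi hj; omega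
  | @cons a b c h q ih =>
    intro i j hi hj hij
    have hq : q.IsPath := hp.of_cons
    have ha : a ∉ q.support := by
      have := hp
      rw [Walk.cons_isPath_iff] at this
      exact this.2
    cases i with
    | zero =>
      cases j with
      | zero => rfl
      | succ j =>
        exfalso
        rw [Walk.getVert_zero, Walk.getVert_cons_succ] at hij
        exact ha (Walk.mem_support_iff_exists_getVert.mpr ⟨j, hij.symm, by simpa using hj⟩)
    | succ i =>
      cases j with
      | zero =>
        exfalso
        rw [Walk.getVert_zero, Walk.getVert_cons_succ] at hij
        exact ha (Walk.mem_support_iff_exists_getVert.mpr ⟨i, hij, by simpa using hi⟩)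
      | succ j =>
        rw [Walk.getVert_cons_succ, Walk.getVert_cons_succ] at hij
        have := ih hq (by simpa using hi) (by simpa using hj) hij
        omega


end Aux

section Aux2

variable {V : Type*} [Fintype V] (G : SimpleGraph V)

lemma chi_colorable (t : Set V) : (G.induce t).Colorable (chi (G.induce t)) :=
  colorable_chromaticNumber_of_fintype _

lemma chi_le' {t : Set V} {N : ℕ} (g : V → ℕ)
    (hg : ∀ a ∈ t, ∀ b ∈ t, G.Adj a b → g a ≠ g b) (hb : ∀ a ∈ t, g a < N) :
    chi (G.induce t) ≤ N := by
  have hcol : (G.induce t).Colorable N := by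
    rw [colorable_iff_exists_bdd_nat_coloring]
    exact ⟨⟨fun x => g x.1, fun {a b} hab => hg a.1 a.2 b.1 b.2 hab⟩, fun v => hb v.1 v.2⟩
  have := hcol.chromaticNumber_le
  unfold chi
  exact ENat.toNat_le_of_le_coe this

lemma chi_coloring' (t : Set V) : ∃ g : V → ℕ,
    (∀ a ∈ t, ∀ b ∈ t, G.Adj a b → g a ≠ g b) ∧ ∀ a ∈ t, g a < chi (G.induce t) := by
  classical
  obtain ⟨C, hC⟩ := (colorable_iff_exists_bdd_nat_coloring _).mp (chi_colorable G t)
  refine ⟨fun v => if h : v ∈ t then C ⟨v, h⟩ else 0, ?_, ?_⟩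
  · intro a ha b hb hab
    simp only [dif_pos ha, dif_pos hb]
    exact C.valid hab
  · intro a ha; simpa [dif_pos ha] using hC ⟨a, ha⟩

lemma chi_mono' {t u : Set V} (h : t ⊆ u) : chi (G.induce t) ≤ chi (G.induce u) := by
  obtain ⟨g, hg, hb⟩ := chi_coloring' G u
  exact chi_le' G g (fun a ha b hb' => hg a (h ha) b (h hb')) (fun a ha => hb a (h ha))

lemma one_le_chi' {t : Set V} (h : t.Nonempty) : 1 ≤ chi (G.induce t) := by
  have hne : Nonempty t := h.to_subtype
  by_contra hc
  push_neg at hc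
  have hn : chi (G.induce t) = 0 := by omega
  have hcol := chi_colorable G t
  rw [hn] at hcol
  obtain ⟨x⟩ := hne
  obtain ⟨C⟩ := hcol
  exact (C x).elim0

lemma no_adj_of_chi_le_one {t : Set V} (h : chi (G.induce t) ≤ 1) {a b : V}
    (ha : a ∈ t) (hb : b ∈ t) : ¬ G.Adj a b := by
  intro hab
  have hcol : (G.induce t).Colorable 1 := (chi_colorable G t).mono h
  obtain ⟨C⟩ := hcol
  exact C.valid (by exact hab : (G.induce t).Adj ⟨a, ha⟩ ⟨b, hb⟩) (Subsingleton.elim _ _)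


lemma card_lt_of_surj_not_inj {α β : Type*} [Finite α] [Finite β] (f : α → β)
    (hs : Function.Surjective f) (hni : ¬ Function.Injective f) :
    Nat.card β < Nat.card α := by
  cases nonempty_fintype α
  cases nonempty_fintype β
  simp only [Nat.card_eq_fintype_card]
  exact Fintype.card_lt_of_surjective_not_injective f hs hni

lemma k_le_indep (s : Finset V) :
    Nat.card (G.induce (↑s : Set V)).ConnectedComponent ≤ indepNum' G := by
  classical
  have : Fintype (G.induce (↑s : Set V)).ConnectedComponent := Fintype.ofFinite _
  set out : (G.induce (↑s : Set V)).ConnectedComponent → V :=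
    fun C => (C.out : {x // x ∈ (↑s : Set V)}).1 with hout
  have houtmem : ∀ C, out C ∈ s := fun C => (C.out).2
  have houtmk : ∀ C, (G.induce (↑s : Set V)).connectedComponentMk ⟨out C, (C.out).2⟩ = C := by
    intro C
    exact C.out_eq
  have hinj : Function.Injective out := by
    intro C D h
    rw [← houtmk C, ← houtmk D]
    congr 1
    exact Subtype.ext h
  set R : Finset V := Finset.univ.image out with hR
  have hcard : R.card = Nat.card (G.induce (↑s : Set V)).ConnectedComponent := by
    rw [hR, Finset.card_image_of_injective _ hinj, Nat.card_eq_fintype_card]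
    simp
  have hind : ∀ u ∈ R, ∀ v ∈ R, ¬ G.Adj u v := by
    intro u hu v hv hadj
    obtain ⟨C, _, rfl⟩ := Finset.mem_image.mp hu
    obtain ⟨D, _, rfl⟩ := Finset.mem_image.mp hv
    have hadj' : (G.induce (↑s : Set V)).Adj ⟨out C, (C.out).2⟩ ⟨out D, (D.out).2⟩ := hadj
    have : C = D := by
      rw [← houtmk C, ← houtmk D]
      exact ConnectedComponent.sound hadj'.reachable
    subst this
    exact G.loopless.irrefl _ hadj
  calc Nat.card (G.induce (↑s : Set V)).ConnectedComponent = R.card := hcard.symm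
    _ ≤ _ := by
        have h2 := Finset.le_sup (f := fun t : Finset V =>
          if ∀ u ∈ t, ∀ v ∈ t, ¬ G.Adj u v then t.card else 0) (Finset.mem_univ R)
        rw [indepNum']
        refine le_trans ?_ (by simpa using h2)
        rw [if_pos hind]

lemma k_pos (s : Finset V) (hs : s.Nonempty) :
    0 < Nat.card (G.induce (↑s : Set V)).ConnectedComponent := by
  obtain ⟨x, hx⟩ := hs
  have : Nonempty (G.induce (↑s : Set V)).ConnectedComponent :=
    ⟨(G.induce (↑s : Set V)).connectedComponentMk ⟨x, hx⟩⟩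
  exact Nat.card_pos

lemma k_edgeless (s : Finset V)
    (h : ∀ a ∈ s, ∀ b ∈ s, ¬ G.Adj a b) :
    Nat.card (G.induce (↑s : Set V)).ConnectedComponent = s.card := by
  have hbij : Function.Bijective ((G.induce (↑s : Set V)).connectedComponentMk) := by
    constructor
    · intro a b hab
      have hr : (G.induce (↑s : Set V)).Reachable a b := (ConnectedComponent.eq).mp hab
      obtain ⟨w⟩ := hr
      cases w with
      | nil => rfl
      | cons hadj _ => exact absurd hadj (h _ a.2 _ (by exact Subtype.mem _) )
    · exact Quot.exists_rep
  have := Nat.card_eq_of_bijective _ hbij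
  rw [← this, Nat.card_coe_set_eq, Set.ncard_coe_finset]


lemma chi_insert' {t : Set V} {x : V} (hx : x ∉ t) :
    chi (G.induce (insert x t)) ≤ chi (G.induce t) + 1 := by
  classical
  obtain ⟨g, hg, hb⟩ := chi_coloring' G t
  refine chi_le' G (fun a => if a = x then chi (G.induce t) else g a) ?_ ?_
  · intro a ha b hb' hab
    by_cases hax : a = x <;> by_cases hbx : b = x
    · subst hax; subst hbx; exact absurd hab (G.loopless.irrefl _)
    · have hbt : b ∈ t := hb'.resolve_left hbx
      simp only [if_pos hax, if_neg hbx]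
      exact (hb b hbt).ne'
    · have hat : a ∈ t := ha.resolve_left hax
      simp only [if_neg hax, if_pos hbx]
      exact (hb a hat).ne
    · have hat : a ∈ t := ha.resolve_left hax
      have hbt : b ∈ t := hb'.resolve_left hbx
      simp only [if_neg hax, if_neg hbx]
      exact hg a hat b hbt hab
  · intro a ha
    by_cases hax : a = x
    · simp [hax]
    · have hat : a ∈ t := ha.resolve_left hax
      simp only [if_neg hax]
      exact (hb a hat).trans_le (Nat.le_succ _)

lemma merge (hconn : G.Connected) (s : Finset V) {u v : V} (hu : u ∈ s) (hv : v ∈ s)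
    (hnr : ¬ (G.induce (↑s : Set V)).Reachable ⟨u, hu⟩ ⟨v, hv⟩)
    (hchi : 2 ≤ chi (G.induce (↑s : Set V))) :
    ∃ s' : Finset V, s ⊆ s' ∧
      chi (G.induce (↑s' : Set V)) ≤ chi (G.induce (↑s : Set V)) + 1 ∧
      Nat.card (G.induce (↑s' : Set V)).ConnectedComponent
        < Nat.card (G.induce (↑s : Set V)).ConnectedComponent := by
  classical
  set n := chi (G.induce (↑s : Set V)) with hn
  -- minimal length of a walk between two vertices of s in different components
  set L : Set ℕ := {ℓ | ∃ a b : V, ∃ ha : a ∈ s, ∃ hb : b ∈ s,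
    ¬ (G.induce (↑s : Set V)).Reachable ⟨a, ha⟩ ⟨b, hb⟩ ∧ ∃ w : G.Walk a b, w.length = ℓ}
    with hLdef
  have hLne : L.Nonempty := by
    obtain ⟨w⟩ := hconn.preconnected u v
    exact ⟨w.length, u, v, hu, hv, hnr, w, rfl⟩
  set m := sInf L with hm
  obtain ⟨a, b, ha, hb, hab, W, hW⟩ := Nat.sInf_mem hLne
  have hSHORT : ∀ {a' b' : V} (ha' : a' ∈ s) (hb' : b' ∈ s),
      ¬ (G.induce (↑s : Set V)).Reachable ⟨a', ha'⟩ ⟨b', hb'⟩ →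
      ∀ w : G.Walk a' b', m ≤ w.length := by
    intro a' b' ha' hb' hr w
    exact Nat.sInf_le ⟨a', b', ha', hb', hr, w, rfl⟩
  set P := W.bypass with hPdef
  have hP : P.IsPath := W.bypass_isPath
  have hlen : P.length = m := le_antisymm (W.length_bypass_le.trans_eq hW)
    (hSHORT ha hb hab P)
  set y : ℕ → V := P.getVert with hy
  have hy0 : y 0 = a := P.getVert_zero
  have hym : y m = b := by rw [hy, ← hlen]; exact P.getVert_length
  have hyadj : ∀ i, i < m → G.Adj (y i) (y (i + 1)) := fun i hi =>
    P.adj_getVert_succ (by omega)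
  have hyinj : ∀ {i j}, i ≤ m → j ≤ m → y i = y j → i = j := by
    intro i j hi hj hij
    exact path_getVert_inj G hP (by omega) (by omega) hij
  have hm2 : 2 ≤ m := by
    rcases Nat.lt_or_ge m 2 with hlt | hge
    · exfalso
      rcases Nat.eq_zero_or_pos P.length with h0 | hpos
      · have hab' : a = b := Walk.eq_of_length_eq_zero h0
        subst hab'
        exact hab (Reachable.refl _)
      · have h1 : P.length = 1 := by omega
        have hadj := P.adj_getVert_succ (i := 0) (by omega)
        rw [P.getVert_zero] at hadj
        have hgb : P.getVert 1 = b := by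
          rw [show (1:ℕ) = P.length by omega]; exact P.getVert_length
        rw [show (0:ℕ)+1 = 1 from rfl, hgb] at hadj
        exact hab (SimpleGraph.Adj.reachable (by exact hadj :
          (G.induce (↑s : Set V)).Adj ⟨a, ha⟩ ⟨b, hb⟩))
    · exact hge
  -- interior vertices are outside s
  have hint : ∀ i, 1 ≤ i → i ≤ m - 1 → y i ∉ s := by
    intro i h1 h2 hyi
    by_cases hr : (G.induce (↑s : Set V)).Reachable ⟨a, ha⟩ ⟨y i, hyi⟩
    · have hr2 : ¬ (G.induce (↑s : Set V)).Reachable ⟨y i, hyi⟩ ⟨b, hb⟩ :=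
        fun h2' => hab (hr.trans h2')
      obtain ⟨w', hw'⟩ := walkDrop G P i
      have := hSHORT hyi hb hr2 w'
      omega
    · obtain ⟨w', hw'⟩ := walkTake G P i
      have := hSHORT ha hyi hr w'
      omega
  -- neighbors of y 1 in s are reachable from a
  have hnbr1 : ∀ i, 1 ≤ i → i < m - 1 → ∀ z, ∀ hz : z ∈ s, G.Adj (y i) z →
      (G.induce (↑s : Set V)).Reachable ⟨a, ha⟩ ⟨z, hz⟩ := by
    intro i h1 h2 z hz hadj
    by_contra hr
    obtain ⟨w', hw'⟩ := walkTake G P i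
    have := hSHORT ha hz hr (w'.concat hadj)
    rw [Walk.length_concat] at this
    omega
  have hnbr2 : ∀ i, 2 ≤ i → i ≤ m - 1 → ∀ z, ∀ hz : z ∈ s, G.Adj (y i) z →
      (G.induce (↑s : Set V)).Reachable ⟨z, hz⟩ ⟨b, hb⟩ := by
    intro i h1 h2 z hz hadj
    by_contra hr
    obtain ⟨w', hw'⟩ := walkDrop G P i
    have := hSHORT hz hb hr (Walk.cons hadj.symm w')
    simp only [Walk.length_cons] at this
    omega
  have hchord : ∀ i j, 1 ≤ i → i + 2 ≤ j → j ≤ m - 1 → ¬ G.Adj (y i) (y j) := by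
    intro i j h1 h2 h3 hadj
    obtain ⟨w1, hw1⟩ := walkTake G P i
    obtain ⟨w2, hw2⟩ := walkDrop G P j
    have := hSHORT ha hb hab (w1.append (Walk.cons hadj w2))
    rw [Walk.length_append, Walk.length_cons] at this
    omega
  set I : Finset V := (Finset.range (m - 1)).image (fun i => y (i + 1)) with hI
  have hImem : ∀ w, w ∈ I ↔ ∃ i, 1 ≤ i ∧ i ≤ m - 1 ∧ y i = w := by
    intro w
    simp only [hI, Finset.mem_image, Finset.mem_range]
    constructor
    · rintro ⟨i, hi, rfl⟩; exact ⟨i + 1, by omega, by omega, rfl⟩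
    · rintro ⟨i, h1, h2, rfl⟩; exact ⟨i - 1, by omega, by rw [Nat.sub_add_cancel h1]⟩
  have hIs : ∀ w ∈ I, w ∉ s := by
    intro w hw
    obtain ⟨i, h1, h2, rfl⟩ := (hImem w).mp hw
    exact hint i h1 h2
  set s' : Finset V := s ∪ I with hs'
  have hss' : s ⊆ s' := Finset.subset_union_left
  have hPsup : ∀ x ∈ P.support, x ∈ (↑s' : Set V) := by
    intro x hx
    obtain ⟨i, hiy, hile⟩ := Walk.mem_support_iff_exists_getVert.mp hx
    rw [hlen] at hile
    have hxmem : x ∈ s ∨ x ∈ I := by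
      rcases Nat.eq_zero_or_pos i with h0 | h1
      · subst h0
        rw [P.getVert_zero] at hiy
        exact Or.inl (hiy ▸ ha)
      · rcases eq_or_lt_of_le hile with hieq | hilt
        · subst hieq
          rw [show P.getVert m = b from hym] at hiy
          exact Or.inl (hiy ▸ hb)
        · exact Or.inr ((hImem x).mpr ⟨i, h1, by omega, hiy⟩)
    exact Finset.mem_coe.mpr (Finset.mem_union.mpr hxmem)
  obtain ⟨f, hf, hfb0⟩ := chi_coloring' G (↑s : Set V)
  have hfb : ∀ z ∈ s, f z < n := fun z hz => hfb0 z hz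
  refine ⟨s', hss', ?_, ?_⟩
  · -- chi bound
    rcases eq_or_lt_of_le hm2 with hm2' | hm3
    · -- m = 2 : single new vertex y 1, fresh color n
      have hI1 : ∀ w, w ∈ I ↔ w = y 1 := by
        intro w
        rw [hImem]
        constructor
        · rintro ⟨i, h1, h2, rfl⟩
          have : i = 1 := by omega
          subst this; rfl
        · rintro rfl; exact ⟨1, le_refl _, by omega, rfl⟩
      refine chi_le' G (fun w => if w = y 1 then n else f w) ?_ ?_
      · intro p hp q hq hadj
        have hp' : p ∈ s ∨ p = y 1 := by
          rcases Finset.mem_union.mp (Finset.mem_coe.mp hp) with h | h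
          exacts [Or.inl h, Or.inr ((hI1 p).mp h)]
        have hq' : q ∈ s ∨ q = y 1 := by
          rcases Finset.mem_union.mp (Finset.mem_coe.mp hq) with h | h
          exacts [Or.inl h, Or.inr ((hI1 q).mp h)]
        have hy1s : y 1 ∉ s := hint 1 (le_refl _) (by omega)
        show (if p = y 1 then n else f p) ≠ (if q = y 1 then n else f q)
        rcases hp' with hps | rfl <;> rcases hq' with hqs | rfl
        · rw [if_neg (fun h : p = y 1 => hy1s (h ▸ hps)),
            if_neg (fun h : q = y 1 => hy1s (h ▸ hqs))]
          exact hf p hps q hqs hadj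
        · rw [if_neg (fun h : p = y 1 => hy1s (h ▸ hps)), if_pos rfl]
          exact (hfb p hps).ne
        · rw [if_pos rfl, if_neg (fun h : q = y 1 => hy1s (h ▸ hqs))]
          exact (hfb q hqs).ne'
        · exact absurd hadj (G.loopless.irrefl _)
      · intro w hw
        show (if w = y 1 then n else f w) < n + 1
        by_cases h : w = y 1
        · rw [if_pos h]; omega
        · rw [if_neg h]
          have hws : w ∈ s := by
            rcases Finset.mem_union.mp (Finset.mem_coe.mp hw) with h' | h'
            · exact h'
            · exact absurd ((hI1 w).mp h') h
          exact (hfb w hws).trans_le (Nat.le_succ n)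
    · -- m ≥ 3
      set B : Set V := {z : V | ∃ hz : z ∈ s,
        (G.induce (↑s : Set V)).Reachable ⟨z, hz⟩ ⟨b, hb⟩} with hBdef
      have hBs : B ⊆ (↑s : Set V) := fun z hz => hz.1
      have hbB : b ∈ B := ⟨hb, Reachable.refl _⟩
      have hx2s : y (m-1) ∉ s := hint (m-1) (by omega) (le_refl _)
      have hx1s : y 1 ∉ s := hint 1 (le_refl _) (by omega)
      have hx2B : y (m-1) ∉ B := fun h => hx2s (hBs h)
      have hx1x2 : y 1 ≠ y (m-1) := fun h => by
        have := hyinj (by omega) (by omega) h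
        omega
      set R2 : Set V := insert (y (m-1)) B with hR2def
      have hchiR2 : chi (G.induce R2) ≤ n + 1 :=
        (chi_insert' G hx2B).trans (Nat.add_le_add_right (chi_mono' G hBs) 1)
      obtain ⟨g2, hg2, hg2b0⟩ := chi_coloring' G R2
      have hg2b : ∀ z ∈ R2, g2 z < n + 1 :=
        fun z hz => (hg2b0 z hz).trans_le hchiR2
      set σ : Equiv.Perm ℕ := Equiv.swap (g2 (y (m-1))) 0 with hσdef
      set g2' : V → ℕ := fun w => σ (g2 w) with hg2'def
      have hg2'x2 : g2' (y (m-1)) = 0 := Equiv.swap_apply_left _ _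
      have hg2'ne : ∀ p ∈ R2, ∀ q ∈ R2, G.Adj p q → g2' p ≠ g2' q :=
        fun p hp q hq hadj h => hg2 p hp q hq hadj (σ.injective h)
      have hg2'b : ∀ z ∈ R2, g2' z < n + 1 := by
        intro z hz
        have h1 := hg2b z hz
        have h2 := hg2b (y (m-1)) (Set.mem_insert _ _)
        show σ (g2 z) < n + 1
        rw [hσdef]
        rcases eq_or_ne (g2 z) (g2 (y (m-1))) with he | he
        · rw [he, Equiv.swap_apply_left]; omega
        · rcases eq_or_ne (g2 z) 0 with h0 | h0
          · rw [h0, Equiv.swap_apply_right]; omega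
          · rw [Equiv.swap_apply_of_ne_of_ne he h0]; omega
      set mid : V → Prop := fun w => ∃ i, 2 ≤ i ∧ i ≤ m - 2 ∧ y i = w with hmiddef
      set g : V → ℕ := fun w =>
        if w = y 1 then n
        else if w ∈ R2 then g2' w
        else if h : mid w then (if Classical.choose h % 2 = 0 then 1 else 2)
        else f w with hgdef
      -- value lemmas
      have gv1 : g (y 1) = n := if_pos rfl
      have gvR2 : ∀ z ∈ R2, g z = g2' z := by
        intro z hz
        have hzy1 : z ≠ y 1 := by
          rcases hz with h | h
          · rw [h]; exact hx1x2.symm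
          · intro he; exact hx1s (he ▸ hBs h)
        rw [hgdef]
        simp only [if_neg hzy1, if_pos hz]
      have gvmid : ∀ i, 2 ≤ i → i ≤ m - 2 → g (y i) = (if i % 2 = 0 then 1 else 2) := by
        intro i h2i him
        have hyi1 : y i ≠ y 1 := fun h => by have := hyinj (by omega) (by omega) h; omega
        have hyiR2 : y i ∉ R2 := by
          intro h
          rcases h with h | h
          · have := hyinj (by omega) (by omega) h; omega
          · exact hint i (by omega) (by omega) (hBs h)
        have hmidi : mid (y i) := ⟨i, h2i, him, rfl⟩
        rw [hgdef]
        simp only [if_neg hyi1, if_neg hyiR2, dif_pos hmidi]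
        obtain ⟨hc2, hcm, hcy⟩ := Classical.choose_spec hmidi
        have : Classical.choose hmidi = i := hyinj (by omega) (by omega) hcy
        rw [this]
      have gvS : ∀ z ∈ s, z ∉ B → g z = f z := by
        intro z hzs hzB
        have hzy1 : z ≠ y 1 := fun h => hx1s (h ▸ hzs)
        have hzR2 : z ∉ R2 := by
          intro h
          rcases h with h | h
          · exact hx2s (h ▸ hzs)
          · exact hzB h
        have hzmid : ¬ mid z := by
          rintro ⟨i, h2i, him, rfl⟩
          exact hint i (by omega) (by omega) hzs
        rw [hgdef]
        simp only [if_neg hzy1, if_neg hzR2, dif_neg hzmid]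
      -- classification of vertices of s'
      have hclass : ∀ w, w ∈ (↑s' : Set V) → w = y 1 ∨ w = y (m-1) ∨
          (∃ i, 2 ≤ i ∧ i ≤ m - 2 ∧ w = y i) ∨ (w ∈ B) ∨ (w ∈ s ∧ w ∉ B) := by
        intro w hw
        rcases Finset.mem_union.mp (Finset.mem_coe.mp hw) with hws | hwI
        · by_cases hB : w ∈ B
          · exact Or.inr (Or.inr (Or.inr (Or.inl hB)))
          · exact Or.inr (Or.inr (Or.inr (Or.inr ⟨hws, hB⟩)))
        · obtain ⟨i, h1, h2, rfl⟩ := (hImem w).mp hwI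
          rcases eq_or_lt_of_le h1 with h | h
          · exact Or.inl (by rw [← h])
          · rcases eq_or_lt_of_le h2 with h' | h'
            · exact Or.inr (Or.inl (by rw [h']))
            · exact Or.inr (Or.inr (Or.inl ⟨i, by omega, by omega, rfl⟩))
      -- no-neighbor facts
      have hreachB : ∀ z, z ∈ s → ∀ hz : z ∈ s,
          (G.induce (↑s : Set V)).Reachable ⟨z, hz⟩ ⟨b, hb⟩ → z ∈ B := by
        intro z _ hz hr
        exact ⟨hz, hr⟩
      have hmid_no_s : ∀ i, 2 ≤ i → i ≤ m - 2 → ∀ z, z ∈ s → ¬ G.Adj (y i) z := by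
        intro i h2i him z hzs hadj
        have hra := hnbr1 i (by omega) (by omega) z hzs hadj
        have hrb := hnbr2 i (by omega) (by omega) z hzs hadj
        exact hab (hra.trans hrb)
      have hy1_nbr : ∀ z, z ∈ s → G.Adj (y 1) z → z ∉ B := by
        intro z hzs hadj hzB
        have hra := hnbr1 1 (le_refl _) (by omega) z hzs hadj
        exact hab (hra.trans hzB.2)
      have hx2_nbr : ∀ z, z ∈ s → G.Adj (y (m-1)) z → z ∈ B := by
        intro z hzs hadj
        exact ⟨hzs, hnbr2 (m-1) (by omega) (le_refl _) z hzs hadj⟩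
      have hBS_no : ∀ p, p ∈ B → ∀ q, q ∈ s → q ∉ B → ¬ G.Adj p q := by
        intro p hpB q hqs hqB hadj
        refine hqB ⟨hqs, ?_⟩
        refine Reachable.trans ?_ hpB.2
        exact SimpleGraph.Adj.reachable
          (by exact hadj.symm : (G.induce (↑s : Set V)).Adj ⟨q, hqs⟩ ⟨p, hpB.1⟩)
      -- properness
      refine chi_le' G g ?_ ?_
      · intro p hp q hq hadj
        rcases hclass p hp with rfl | rfl | ⟨i, hi2, him, rfl⟩ | hpB | ⟨hps, hpB⟩ <;>
          rcases hclass q hq with rfl | rfl | ⟨j, hj2, hjm, rfl⟩ | hqB | ⟨hqs, hqB⟩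
        · exact absurd hadj (G.loopless.irrefl _)
        · rw [gv1, gvR2 _ (Set.mem_insert _ _), hg2'x2]; omega
        · -- y1 vs mid j
          rcases eq_or_lt_of_le hj2 with h | h
          · rw [gv1, gvmid j hj2 hjm, ← h]
            norm_num; omega
          · exact absurd hadj (hchord 1 j (le_refl _) (by omega) (by omega))
        · exact absurd (hy1_nbr _ (hBs hqB) hadj hqB) (fun h => h)
        · rw [gv1, gvS q hqs hqB]; exact (hfb q hqs).ne'
        · rw [gvR2 _ (Set.mem_insert _ _), hg2'x2, gv1]; omega
        · exact absurd hadj (G.loopless.irrefl _)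
        · rw [gvR2 _ (Set.mem_insert _ _), hg2'x2, gvmid j hj2 hjm]
          split_ifs <;> omega
        · rw [gvR2 _ (Set.mem_insert _ _), gvR2 _ (Set.mem_insert_of_mem _ hqB)]
          exact hg2'ne _ (Set.mem_insert _ _) _ (Set.mem_insert_of_mem _ hqB) hadj
        · exact absurd hadj (fun h => hqB (hx2_nbr q hqs h))
        · -- mid i vs y1
          rcases eq_or_lt_of_le hi2 with h | h
          · rw [gvmid i hi2 him, gv1, ← h]
            norm_num; omega
          · exact absurd hadj.symm (hchord 1 i (le_refl _) (by omega) (by omega))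
        · rw [gvmid i hi2 him, gvR2 _ (Set.mem_insert _ _), hg2'x2]
          split_ifs <;> omega
        · -- mid vs mid
          rcases lt_trichotomy i j with hij | hij | hij
          · rcases Nat.lt_or_ge (i+1) j with h2 | h2
            · exact absurd hadj (hchord i j (by omega) (by omega) (by omega))
            · have : j = i + 1 := by omega
              subst this
              rw [gvmid i hi2 him, gvmid (i+1) hj2 hjm]
              split_ifs <;> omega
          · subst hij; exact absurd hadj (G.loopless.irrefl _)
          · rcases Nat.lt_or_ge (j+1) i with h2 | h2
            · exact absurd hadj.symm (hchord j i (by omega) (by omega) (by omega))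
            · have : i = j + 1 := by omega
              subst this
              rw [gvmid (j+1) hi2 him, gvmid j hj2 hjm]
              split_ifs <;> omega
        · exact absurd hadj (hmid_no_s i hi2 him _ (hBs hqB))
        · exact absurd hadj (hmid_no_s i hi2 him _ hqs)
        · exact absurd (hy1_nbr _ (hBs hpB) hadj.symm hpB) (fun h => h)
        · rw [gvR2 _ (Set.mem_insert_of_mem _ hpB), gvR2 _ (Set.mem_insert _ _)]
          exact hg2'ne _ (Set.mem_insert_of_mem _ hpB) _ (Set.mem_insert _ _) hadj
        · exact absurd hadj.symm (hmid_no_s j hj2 hjm _ (hBs hpB))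
        · rw [gvR2 _ (Set.mem_insert_of_mem _ hpB), gvR2 _ (Set.mem_insert_of_mem _ hqB)]
          exact hg2'ne _ (Set.mem_insert_of_mem _ hpB) _ (Set.mem_insert_of_mem _ hqB) hadj
        · exact absurd hadj (hBS_no p hpB q hqs hqB)
        · rw [gvS p hps hpB, gv1]; exact (hfb p hps).ne
        · exact absurd hadj.symm (fun h => hpB (hx2_nbr p hps h))
        · exact absurd hadj.symm (hmid_no_s j hj2 hjm _ hps)
        · exact absurd hadj.symm (hBS_no q hqB p hps hpB)
        · rw [gvS p hps hpB, gvS q hqs hqB]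
          exact hf p hps q hqs hadj
      · -- bound
        intro w hw
        rcases hclass w hw with rfl | rfl | ⟨i, hi2, him, rfl⟩ | hwB | ⟨hws, hwB⟩
        · rw [gv1]; omega
        · rw [gvR2 _ (Set.mem_insert _ _)]
          exact hg2'b _ (Set.mem_insert _ _)
        · rw [gvmid i hi2 him]; split_ifs <;> omega
        · rw [gvR2 _ (Set.mem_insert_of_mem _ hwB)]
          exact hg2'b _ (Set.mem_insert_of_mem _ hwB)
        · rw [gvS w hws hwB]
          exact (hfb w hws).trans_le (Nat.le_succ n)
  · -- component count drops
    set ι : G.induce (↑s : Set V) →g G.induce (↑s' : Set V) :=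
      ⟨fun x => ⟨x.1, by exact_mod_cast hss' (by exact_mod_cast x.2)⟩, fun hadj => hadj⟩ with hι
    set F := ConnectedComponent.map ι with hF
    have hPreach : (G.induce (↑s' : Set V)).Reachable ⟨a, by exact_mod_cast hss' ha⟩
        ⟨b, by exact_mod_cast hss' hb⟩ :=
      reach_of_walk G P _ _ hPsup
    have hsurj : Function.Surjective F := by
      intro C
      induction C using ConnectedComponent.ind with
      | _ w =>
        obtain ⟨w, hw⟩ := w
        have hw' : w ∈ s ∪ I := by exact_mod_cast hw
        rcases Finset.mem_union.mp hw' with hws | hwI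
        · exact ⟨(G.induce (↑s : Set V)).connectedComponentMk ⟨w, by exact_mod_cast hws⟩, rfl⟩
        · refine ⟨(G.induce (↑s : Set V)).connectedComponentMk ⟨b, by exact_mod_cast hb⟩, ?_⟩
          have hwsup : w ∈ P.support := by
            obtain ⟨i, h1, h2, rfl⟩ := (hImem w).mp hwI
            exact Walk.mem_support_iff_exists_getVert.mpr ⟨i, rfl, by omega⟩
          have hreach : (G.induce (↑s' : Set V)).Reachable ⟨w, hw⟩
              ⟨b, by exact_mod_cast hss' hb⟩ := by
            refine reach_of_walk G (P.dropUntil w hwsup) hw _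
              (fun x hx => hPsup x (P.support_dropUntil_subset hwsup hx))
          calc F ((G.induce (↑s : Set V)).connectedComponentMk ⟨b, by exact_mod_cast hb⟩)
              = (G.induce (↑s' : Set V)).connectedComponentMk ⟨b, by exact_mod_cast hss' hb⟩ := rfl
            _ = (G.induce (↑s' : Set V)).connectedComponentMk ⟨w, hw⟩ :=
                (ConnectedComponent.sound hreach).symm
    have hninj : ¬ Function.Injective F := by
      intro hinj
      apply hab
      have : F ((G.induce (↑s : Set V)).connectedComponentMk ⟨a, by exact_mod_cast ha⟩)
          = F ((G.induce (↑s : Set V)).connectedComponentMk ⟨b, by exact_mod_cast hb⟩) := by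
        exact ConnectedComponent.sound hPreach
      have := hinj this
      exact (ConnectedComponent.eq).mp this
    exact card_lt_of_surj_not_inj F hsurj hninj


lemma main_ineq (hconn : G.Connected) (c : V → ℕ) (hc : IsProper G c) :
    ∀ K : ℕ, ∀ s : Finset V,
      Nat.card (G.induce (↑s : Set V)).ConnectedComponent ≤ K →
      disc G c s ≤ phiHatC G c + (K - 1) := by
  classical
  intro K
  induction K using Nat.strong_induction_on with
  | _ K ih =>
    intro s hK
    by_cases hcon : (G.induce (↑s : Set V)).Connected
    · have h1 : disc G c s ≤ phiHatC G c := by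
        have h2 := Finset.le_sup (f := fun t : Finset V =>
          if (G.induce (↑t : Set V)).Connected then disc G c t else 0) (Finset.mem_univ s)
        rw [phiHatC]
        refine le_trans ?_ (by simpa using h2)
        rw [if_pos hcon]
      exact h1.trans (Nat.le_add_right _ _)
    rcases Finset.eq_empty_or_nonempty s with rfl | hne
    · have hd : disc G c ∅ = 0 := by simp [disc]
      omega
    have hK1 : 1 ≤ K := le_trans (k_pos G s hne) hK
    have hnotpre : ¬ (G.induce (↑s : Set V)).Preconnected := by
      intro hpre
      obtain ⟨x, hx⟩ := hne
      haveI : Nonempty (↑(↑s : Set V)) := ⟨⟨x, hx⟩⟩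
      exact hcon ⟨hpre⟩
    rw [SimpleGraph.Preconnected] at hnotpre
    push_neg at hnotpre
    obtain ⟨⟨u', hu'⟩, ⟨v', hv'⟩, hnr⟩ := hnotpre
    by_cases hchi : 2 ≤ chi (G.induce (↑s : Set V))
    · obtain ⟨s', hss', hchi', hk'⟩ := merge G hconn s hu' hv' hnr hchi
      have hs'ne : s'.Nonempty := hne.mono hss'
      have hk2 : 2 ≤ K := by
        have := k_pos G s' hs'ne
        omega
      have hIH := ih (K - 1) (by omega) s' (by omega)
      have himg : (s.image c).card ≤ (s'.image c).card :=
        Finset.card_le_card (Finset.image_subset_image hss')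
      rw [disc] at hIH ⊢
      omega
    · have h1 : chi (G.induce (↑s : Set V)) = 1 := by
        have := one_le_chi' G (t := (↑s : Set V)) (by
          obtain ⟨x, hx⟩ := hne; exact ⟨x, hx⟩)
        omega
      have hnoadj : ∀ a ∈ s, ∀ b ∈ s, ¬ G.Adj a b := by
        intro a ha b hb
        exact no_adj_of_chi_le_one G (le_of_eq h1) ha hb
      have hcard := k_edgeless G s hnoadj
      have himg : (s.image c).card ≤ s.card := Finset.card_image_le
      rw [disc, h1]
      omega

end Aux2

theorem stmt18 {V : Type*} [Fintype V] (G : SimpleGraph V) (hconn : G.Connected) :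
    phi G ≤ phiHat G + indepNum' G - 1 := by
  classical
  have hPne : {n | ∃ c, IsProper G c ∧ phiHatC G c = n}.Nonempty := by
    refine ⟨phiHatC G (fun v => (Fintype.equivFin V v : ℕ)),
      fun v => (Fintype.equivFin V v : ℕ), ?_, rfl⟩
    intro a b hadj he
    exact hadj.ne ((Fintype.equivFin V).injective (Fin.val_injective he))
  obtain ⟨cstar, hcp, hceq⟩ := Nat.sInf_mem hPne
  have h1 : phi G ≤ phiC G cstar := Nat.sInf_le ⟨cstar, hcp, rfl⟩
  refine h1.trans ?_
  rw [phiC]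
  apply Finset.sup_le
  intro s _
  have hmain := main_ineq G hconn cstar hcp
    (Nat.card (G.induce (↑s : Set V)).ConnectedComponent) s (le_refl _)
  have hka := k_le_indep G s
  rw [hceq] at hmain
  have hα : 1 ≤ indepNum' G := by
    obtain ⟨x⟩ := hconn.nonempty
    have h2 := Finset.le_sup (f := fun t : Finset V =>
      if ∀ u ∈ t, ∀ v ∈ t, ¬ G.Adj u v then t.card else 0) (Finset.mem_univ ({x} : Finset V))
    rw [indepNum']
    refine le_trans ?_ h2
    show (1:ℕ) ≤ if ∀ u ∈ ({x} : Finset V), ∀ v ∈ ({x} : Finset V), ¬ G.Adj u v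
      then ({x} : Finset V).card else 0
    rw [if_pos]
    · simp
    · intro u hu v hv
      rw [Finset.mem_singleton] at hu hv
      subst hu; subst hv
      exact G.loopless.irrefl _
  rw [phiHat]
  omega
end

section
/- For any graph G, there exists a complete coloring c of G such that φ_c(G) = φ(G). -/
open SimpleGraph

theorem stmt19 {V : Type*} [Fintype V] (G : SimpleGraph V) :
    ∃ c : V → ℕ, IsProper G c ∧
      (∀ k₁ ∈ Finset.univ.image c, ∀ k₂ ∈ Finset.univ.image c, k₁ ≠ k₂ →
        ∃ u v, G.Adj u v ∧ c u = k₁ ∧ c v = k₂) ∧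
      phiC G c = phi G := by
  classical
  have hne : {n | ∃ c, IsProper G c ∧ phiC G c = n}.Nonempty := by
    refine ⟨phiC G (fun v => ((Fintype.equivFin V v : Fin _) : ℕ)), fun v => _, ?_, rfl⟩
    intro u v huv h
    exact huv.ne ((Fintype.equivFin V).injective (Fin.val_injective h))
  have key : ∀ n (c : V → ℕ), (Finset.univ.image c).card ≤ n → IsProper G c →
      phiC G c = phi G → ∃ c' : V → ℕ, IsProper G c' ∧
      (∀ k₁ ∈ Finset.univ.image c', ∀ k₂ ∈ Finset.univ.image c', k₁ ≠ k₂ →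
        ∃ u v, G.Adj u v ∧ c' u = k₁ ∧ c' v = k₂) ∧ phiC G c' = phi G := by
    intro n
    induction n with
    | zero =>
      intro c hcard hc hphi
      refine ⟨c, hc, ?_, hphi⟩
      intro k₁ hk₁
      rw [Finset.card_eq_zero.mp (Nat.le_zero.mp hcard)] at hk₁
      exact absurd hk₁ (Finset.notMem_empty _)
    | succ n ih =>
      intro c hcard hc hphi
      by_cases hcomp : ∀ k₁ ∈ Finset.univ.image c, ∀ k₂ ∈ Finset.univ.image c, k₁ ≠ k₂ →
          ∃ u v, G.Adj u v ∧ c u = k₁ ∧ c v = k₂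
      · exact ⟨c, hc, hcomp, hphi⟩
      push_neg at hcomp
      obtain ⟨k₁, hk₁, k₂, hk₂, hne12, hbad⟩ := hcomp
      set f : ℕ → ℕ := fun x => if x = k₂ then k₁ else x with hf
      set c' : V → ℕ := fun v => f (c v) with hcdef
      have himg : ∀ s : Finset V, s.image c' = (s.image c).image f := by
        intro s; rw [Finset.image_image]; rfl
      have hproper : IsProper G c' := by
        intro u v huv heq
        simp only [hcdef, hf] at heq
        by_cases h1 : c u = k₂ <;> by_cases h2 : c v = k₂
        · exact hc huv (h1.trans h2.symm)
        · rw [if_pos h1, if_neg h2] at heq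
          exact hbad v u huv.symm heq.symm h1
        · rw [if_neg h1, if_pos h2] at heq
          exact hbad u v huv heq h2
        · rw [if_neg h1, if_neg h2] at heq
          exact hc huv heq
      have hsub : Finset.univ.image c' ⊆ (Finset.univ.image c).erase k₂ := by
        intro x hx
        obtain ⟨v, -, hv⟩ := Finset.mem_image.mp hx
        simp only [hcdef, hf] at hv
        by_cases h : c v = k₂
        · rw [if_pos h] at hv
          exact Finset.mem_erase.mpr ⟨hv ▸ hne12, hv ▸ hk₁⟩
        · rw [if_neg h] at hv
          exact Finset.mem_erase.mpr ⟨hv ▸ h, hv ▸ Finset.mem_image_of_mem c (Finset.mem_univ v)⟩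
      have hcard' : (Finset.univ.image c').card ≤ n := by
        have h1 := Finset.card_le_card hsub
        have h2 : ((Finset.univ.image c).erase k₂).card < (Finset.univ.image c).card :=
          Finset.card_erase_lt_of_mem hk₂
        omega
      have hle : phiC G c' ≤ phiC G c := by
        apply Finset.sup_mono_fun
        intro s _
        unfold disc
        apply Nat.sub_le_sub_right
        rw [himg s]
        exact Finset.card_image_le
      have hge : phi G ≤ phiC G c' := Nat.sInf_le ⟨c', hproper, rfl⟩
      exact ih c' hcard' hproper (le_antisymm (hphi ▸ hle) hge)
  obtain ⟨c, hc, hphi⟩ := Nat.sInf_mem hne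
  exact key _ c le_rfl hc hphi
end
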